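/- arXiv:math/0601463 — 3 statements merged into one kernel-verified Lean document; each statement's English description precedes it below -/
import Mathlib

section
/- For all nonnegative integers n, N and all 0 ≤ j ≤ N, the number of overpartitions of n whose Frobenius representation has N columns and exactly j overlined parts in the bottom row equals the number of overpartitions of n with generalized Durfee square of size N and exactly N − j overlined parts. -/
namespace Paper

/-- An overpartition is represented as a list of pairs `(part, overlined?)`.
Parts are positive, the list is non-increasing in the part sizes, and among
equal parts only the final occurrence may be overlined. -/
def IsOverpartition (l : List (ℕ × Bool)) : Prop :=
  (∀ p ∈ l, 1 ≤ p.1) ∧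
  l.Chain' fun x y => y.1 < x.1 ∨ (x.1 = y.1 ∧ x.2 = false)

/-- The weight of an overpartition: the sum of its parts. -/
def opWeight (l : List (ℕ × Bool)) : ℕ := (l.map Prod.fst).sum

/-- The number of overlined parts. -/
def opOverlined (l : List (ℕ × Bool)) : ℕ := (l.filter fun p => p.2).length

/-- The difference condition of Gordon type: `λ_ℓ - λ_{ℓ+k-1} ≥ 1` if `λ_{ℓ+k-1}` is
overlined and `λ_ℓ - λ_{ℓ+k-1} ≥ 2` otherwise (indices `0`-based). -/
def GapCond (k : ℕ) (l : List (ℕ × Bool)) : Prop :=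
  ∀ m : ℕ, m + (k - 1) < l.length →
    (l.getD (m + (k - 1)) (0, false)).1 +
      (if (l.getD (m + (k - 1)) (0, false)).2 then 1 else 2) ≤ (l.getD m (0, false)).1

/-- Overpartitions counted by `B̄_{k,i}`: the Gordon difference condition holds and at
most `i - 1` parts are equal to `1`. -/
def BCond (k i : ℕ) (l : List (ℕ × Bool)) : Prop :=
  IsOverpartition l ∧ GapCond k l ∧ (l.filter fun p => p.1 == 1).length ≤ i - 1

/-- `Bbar k i n j` : the number of overpartitions of `n` with `j` overlined parts
satisfying the `B̄_{k,i}` conditions. -/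
noncomputable def Bbar (k i n j : ℕ) : ℕ :=
  Nat.card {l : List (ℕ × Bool) //
    BCond k i l ∧ opWeight l = n ∧ opOverlined l = j}

/-- The Frobenius representation of an overpartition: a two-rowed array whose top row
is a partition into distinct nonnegative parts and whose bottom row is an
overpartition into nonnegative parts where the first occurrence of a part may be
overlined. -/
structure FrobSym : Type where
  top : List ℕ
  bot : List (ℕ × Bool)
  top_sorted : top.Chain' (· > ·)
  bot_sorted : bot.Chain' fun x y => y.1 < x.1 ∨ (x.1 = y.1 ∧ y.2 = false)
  len_eq : top.length = bot.length

/-- The number of columns of a Frobenius symbol. -/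
def frobCols (F : FrobSym) : ℕ := F.top.length

/-- The weight of the overpartition represented by a Frobenius symbol. -/
def frobWeight (F : FrobSym) : ℕ :=
  F.top.length + F.top.sum + (F.bot.map Prod.fst).sum

/-- The number of non-overlined parts in the bottom row. -/
def botNonOverlined (F : FrobSym) : ℕ := (F.bot.filter fun p => !p.2).length

/-- The number of overlined parts in the bottom row. -/
def botOverlined (F : FrobSym) : ℕ := (F.bot.filter fun p => p.2).length

/-- The `m`-th successive rank (0-based): `a_m - b_m` minus the number of
non-overlined parts among `b_{m+1}, …, b_N`. -/
def frobRank (F : FrobSym) (m : ℕ) : ℤ :=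
  (F.top.getD m 0 : ℤ) - ((F.bot.getD m (0, false)).1 : ℤ) -
    (((F.bot.drop (m + 1)).filter fun p => !p.2).length : ℤ)

/-- All successive ranks lie in the interval `[-i+2, 2k-i-1]`. -/
def RankCond (k i : ℕ) (F : FrobSym) : Prop :=
  ∀ m : ℕ, m < F.top.length →
    -(i : ℤ) + 2 ≤ frobRank F m ∧ frobRank F m ≤ 2 * (k : ℤ) - i - 1

/-- `Cbar k i n j` : the number of overpartitions of `n` (counted through their
Frobenius representation) with `j` non-overlined parts in the bottom row and all
successive ranks in `[-i+2, 2k-i-1]`. -/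
noncomputable def Cbar (k i n j : ℕ) : ℕ :=
  Nat.card {F : FrobSym //
    frobWeight F = n ∧ botNonOverlined F = j ∧ RankCond k i F}

/-- The list of overlined parts (in order). -/
def olList (l : List (ℕ × Bool)) : List ℕ := (l.filter fun p => p.2).map Prod.fst

/-- The list of non-overlined parts (in order). -/
def nolList (l : List (ℕ × Bool)) : List ℕ := (l.filter fun p => !p.2).map Prod.fst

/-- The size of the generalized Durfee square: the largest `N` such that the number of
overlined parts plus the number of non-overlined parts `≥ N` is at least `N`. -/
noncomputable def genDurfeeSize (l : List (ℕ × Bool)) : ℕ :=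
  Nat.findGreatest
    (fun N => N ≤ (olList l).length + ((nolList l).filter fun p => decide (N ≤ p)).length)
    l.length

/-- The size of the generalized Durfee rectangle: the largest `N` such that the number
of overlined parts plus the number of non-overlined parts `≥ N + 1` is at least `N`. -/
noncomputable def genDurfeeRectSize (l : List (ℕ × Bool)) : ℕ :=
  Nat.findGreatest
    (fun N => N ≤ (olList l).length + ((nolList l).filter fun p => decide (N + 1 ≤ p)).length)
    l.length

/-- The (ordinary) partition lying below the first generalized Durfee square/rectangle
of size `N`, when the overlined parts are displayed above the non-overlined ones. -/
def belowGen (l : List (ℕ × Bool)) (N : ℕ) : List ℕ :=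
  (nolList l).drop (N - (olList l).length)

/-- The size of the Durfee square of an ordinary partition. -/
noncomputable def durfeeSquareSize (μ : List ℕ) : ℕ :=
  Nat.findGreatest (fun d => d ≤ (μ.filter fun p => decide (d ≤ p)).length) μ.length

/-- The size of the `d × (d+1)` Durfee rectangle of an ordinary partition. -/
noncomputable def durfeeRectSize (μ : List ℕ) : ℕ :=
  Nat.findGreatest (fun d => d ≤ (μ.filter fun p => decide (d + 1 ≤ p)).length) μ.length

/-- Remove `m` successive Durfee squares. -/
noncomputable def dissectSquares : ℕ → List ℕ → List ℕ
  | 0, μ => μ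
  | m + 1, μ => dissectSquares m (μ.drop (durfeeSquareSize μ))

/-- Remove `m` successive Durfee rectangles. -/
noncomputable def dissectRects : ℕ → List ℕ → List ℕ
  | 0, μ => μ
  | m + 1, μ => dissectRects m (μ.drop (durfeeRectSize μ))

/-- The overpartition has `i - 1` successive Durfee squares followed by `k - i`
successive Durfee rectangles, the first one being a generalized
Durfee square (if `i ≥ 2`) or a generalized Durfee rectangle (if `i = 1`). -/
noncomputable def DurfeeCond (k i : ℕ) (l : List (ℕ × Bool)) : Prop :=
  if 2 ≤ i then
    dissectRects (k - i) (dissectSquares (i - 2) (belowGen l (genDurfeeSize l))) = []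
  else
    dissectRects (k - 2) (belowGen l (genDurfeeRectSize l)) = []

/-- `Dbar k i n j` : the number of overpartitions of `n` with `j` overlined parts and
`i-1` successive Durfee squares followed by `k-i` successive Durfee rectangles, the
first one being a generalized Durfee square/rectangle. -/
noncomputable def Dbar (k i n j : ℕ) : ℕ :=
  Nat.card {l : List (ℕ × Bool) //
    IsOverpartition l ∧ opWeight l = n ∧ opOverlined l = j ∧ DurfeeCond k i l}


abbrev RL : ℕ × Bool → ℕ × Bool → Prop := fun x y => y.1 < x.1 ∨ (x.1 = y.1 ∧ x.2 = false)
abbrev RB : ℕ × Bool → ℕ × Bool → Prop := fun x y => y.1 < x.1 ∨ (x.1 = y.1 ∧ y.2 = false)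

lemma RL_trans : Transitive RL := by
  rintro ⟨a,s⟩ ⟨b,t⟩ ⟨c,u⟩ h1 h2
  rcases h1 with h1 | ⟨rfl, rfl⟩ <;> rcases h2 with h2 | ⟨rfl, rfl⟩
  · exact Or.inl (h2.trans h1)
  · exact Or.inl h1
  · exact Or.inl h2
  · exact Or.inr ⟨rfl, rfl⟩

lemma RB_trans : Transitive RB := by
  rintro ⟨a,s⟩ ⟨b,t⟩ ⟨c,u⟩ h1 h2
  rcases h1 with h1 | ⟨rfl, rfl⟩ <;> rcases h2 with h2 | ⟨rfl, rfl⟩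
  · exact Or.inl (h2.trans h1)
  · exact Or.inl h1
  · exact Or.inl h2
  · exact Or.inr ⟨rfl, rfl⟩

instance : IsTrans (ℕ × Bool) RL := ⟨fun _ _ _ h h2 => RL_trans h h2⟩
instance : IsTrans (ℕ × Bool) RB := ⟨fun _ _ _ h h2 => RB_trans h h2⟩

lemma olList_pairwise_RL {l : List (ℕ × Bool)} (h : l.Pairwise RL) :
    (olList l).Pairwise (· > ·) := by
  rw [olList, List.pairwise_map]
  refine List.Pairwise.imp_of_mem ?_ (h.filter _)
  intro a b ha hb hab
  have ha2 : a.2 = true := by simpa using (List.mem_filter.1 ha).2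
  rcases hab with h1 | ⟨_, h2⟩
  · exact h1
  · simp [ha2] at h2

lemma olList_pairwise_RB {l : List (ℕ × Bool)} (h : l.Pairwise RB) :
    (olList l).Pairwise (· > ·) := by
  rw [olList, List.pairwise_map]
  refine List.Pairwise.imp_of_mem ?_ (h.filter _)
  intro a b ha hb hab
  have hb2 : b.2 = true := by simpa using (List.mem_filter.1 hb).2
  rcases hab with h1 | ⟨_, h2⟩
  · exact h1
  · simp [hb2] at h2

lemma nolList_pairwise_RL {l : List (ℕ × Bool)} (h : l.Pairwise RL) :
    (nolList l).Pairwise (· ≥ ·) := by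
  rw [nolList, List.pairwise_map]
  refine List.Pairwise.imp_of_mem ?_ (h.filter _)
  intro a b _ _ hab
  rcases hab with h1 | ⟨h2, _⟩ <;> omega

lemma nolList_pairwise_RB {l : List (ℕ × Bool)} (h : l.Pairwise RB) :
    (nolList l).Pairwise (· ≥ ·) := by
  rw [nolList, List.pairwise_map]
  refine List.Pairwise.imp_of_mem ?_ (h.filter _)
  intro a b _ _ hab
  rcases hab with h1 | ⟨h2, _⟩ <;> omega

lemma length_ol_add_nol (l : List (ℕ × Bool)) :
    (olList l).length + (nolList l).length = l.length := by
  induction l with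
  | nil => simp [olList, nolList]
  | cons x t ih =>
    cases hx : x.2 <;> simp [olList, nolList, List.filter_cons, hx] at * <;> omega

def mergeL : List ℕ → List ℕ → List (ℕ × Bool)
  | [], d => d.map fun y => (y, false)
  | x :: c, [] => (x, true) :: mergeL c []
  | x :: c, y :: d =>
    if y < x then (x, true) :: mergeL c (y :: d)
    else (y, false) :: mergeL (x :: c) d
termination_by c d => c.length + d.length

def mergeB : List ℕ → List ℕ → List (ℕ × Bool)
  | [], d => d.map fun y => (y, false)
  | x :: c, [] => (x, true) :: mergeB c []
  | x :: c, y :: d =>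
    if y ≤ x then (x, true) :: mergeB c (y :: d)
    else (y, false) :: mergeB (x :: c) d
termination_by c d => c.length + d.length

lemma mergeL_olList (c d : List ℕ) : olList (mergeL c d) = c := by
  induction c, d using mergeL.induct with
  | case1 d => simp [mergeL, olList, List.filter_map, Function.comp_def]
  | case2 x c ih => simp [mergeL, olList] at *; exact ih
  | case3 x c y d h ih => simp [mergeL, olList, h] at *; exact ih
  | case4 x c y d h ih => simp [mergeL, olList, h] at *; exact ih


lemma mergeB_olList (c d : List ℕ) : olList (mergeB c d) = c := by
  induction c, d using mergeB.induct with
  | case1 d => simp [mergeB, olList, List.filter_map, Function.comp_def]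
  | case2 x c ih => simp [mergeB, olList] at *; exact ih
  | case3 x c y d h ih => simp [mergeB, olList, h] at *; exact ih
  | case4 x c y d h ih => simp [mergeB, olList, h] at *; exact ih

lemma mergeL_nolList (c d : List ℕ) : nolList (mergeL c d) = d := by
  induction c, d using mergeL.induct with
  | case1 d => simp [mergeL, nolList, List.filter_map, Function.comp_def]
  | case2 x c ih => simp [mergeL, nolList] at *; exact ih
  | case3 x c y d h ih => simp [mergeL, nolList, h] at *; exact ih
  | case4 x c y d h ih => simp [mergeL, nolList, h] at *; exact ih

lemma mergeB_nolList (c d : List ℕ) : nolList (mergeB c d) = d := by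
  induction c, d using mergeB.induct with
  | case1 d => simp [mergeB, nolList, List.filter_map, Function.comp_def]
  | case2 x c ih => simp [mergeB, nolList] at *; exact ih
  | case3 x c y d h ih => simp [mergeB, nolList, h] at *; exact ih
  | case4 x c y d h ih => simp [mergeB, nolList, h] at *; exact ih

lemma mergeL_perm (c d : List ℕ) : ((mergeL c d).map Prod.fst).Perm (c ++ d) := by
  induction c, d using mergeL.induct with
  | case1 d => simp [mergeL, Function.comp_def]
  | case2 x c ih => simpa [mergeL] using ih.cons x
  | case3 x c y d h ih => simpa [mergeL, h] using ih.cons x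
  | case4 x c y d h ih =>
    simp only [mergeL, if_neg h, List.map_cons]
    exact (ih.cons y).trans List.perm_middle.symm

lemma mergeB_perm (c d : List ℕ) : ((mergeB c d).map Prod.fst).Perm (c ++ d) := by
  induction c, d using mergeB.induct with
  | case1 d => simp [mergeB, Function.comp_def]
  | case2 x c ih => simpa [mergeB] using ih.cons x
  | case3 x c y d h ih => simpa [mergeB, h] using ih.cons x
  | case4 x c y d h ih =>
    simp only [mergeB, if_neg h, List.map_cons]
    exact (ih.cons y).trans List.perm_middle.symm

lemma mergeL_length (c d : List ℕ) : (mergeL c d).length = c.length + d.length := by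
  have := (mergeL_perm c d).length_eq; simpa using this

lemma mergeB_length (c d : List ℕ) : (mergeB c d).length = c.length + d.length := by
  have := (mergeB_perm c d).length_eq; simpa using this

lemma mergeL_sum (c d : List ℕ) : ((mergeL c d).map Prod.fst).sum = c.sum + d.sum := by
  have := (mergeL_perm c d).sum_eq; simpa using this

lemma mergeB_sum (c d : List ℕ) : ((mergeB c d).map Prod.fst).sum = c.sum + d.sum := by
  have := (mergeB_perm c d).sum_eq; simpa using this

lemma mergeL_mem {c d : List ℕ} {z : ℕ × Bool} (hz : z ∈ mergeL c d) :
    (z.2 = true ∧ z.1 ∈ c) ∨ (z.2 = false ∧ z.1 ∈ d) := by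
  induction c, d using mergeL.induct with
  | case1 d => rw [mergeL] at hz; simp at hz; obtain ⟨y, hy, rfl⟩ := hz; simp [hy]
  | case2 x c ih =>
    rw [mergeL] at hz
    rcases List.mem_cons.1 hz with rfl | hz
    · simp
    · rcases ih hz with ⟨h1, h2⟩ | ⟨h1, h2⟩
      · exact Or.inl ⟨h1, List.mem_cons_of_mem _ h2⟩
      · simp at h2
  | case3 x c y d h ih =>
    rw [mergeL, if_pos h] at hz
    rcases List.mem_cons.1 hz with rfl | hz
    · simp
    · rcases ih hz with ⟨h1, h2⟩ | ⟨h1, h2⟩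
      · exact Or.inl ⟨h1, List.mem_cons_of_mem _ h2⟩
      · exact Or.inr ⟨h1, h2⟩
  | case4 x c y d h ih =>
    rw [mergeL, if_neg h] at hz
    rcases List.mem_cons.1 hz with rfl | hz
    · simp
    · rcases ih hz with ⟨h1, h2⟩ | ⟨h1, h2⟩
      · exact Or.inl ⟨h1, h2⟩
      · exact Or.inr ⟨h1, List.mem_cons_of_mem _ h2⟩

lemma mergeB_mem {c d : List ℕ} {z : ℕ × Bool} (hz : z ∈ mergeB c d) :
    (z.2 = true ∧ z.1 ∈ c) ∨ (z.2 = false ∧ z.1 ∈ d) := by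
  induction c, d using mergeB.induct with
  | case1 d => rw [mergeB] at hz; simp at hz; obtain ⟨y, hy, rfl⟩ := hz; simp [hy]
  | case2 x c ih =>
    rw [mergeB] at hz
    rcases List.mem_cons.1 hz with rfl | hz
    · simp
    · rcases ih hz with ⟨h1, h2⟩ | ⟨h1, h2⟩
      · exact Or.inl ⟨h1, List.mem_cons_of_mem _ h2⟩
      · simp at h2
  | case3 x c y d h ih =>
    rw [mergeB, if_pos h] at hz
    rcases List.mem_cons.1 hz with rfl | hz
    · simp
    · rcases ih hz with ⟨h1, h2⟩ | ⟨h1, h2⟩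
      · exact Or.inl ⟨h1, List.mem_cons_of_mem _ h2⟩
      · exact Or.inr ⟨h1, h2⟩
  | case4 x c y d h ih =>
    rw [mergeB, if_neg h] at hz
    rcases List.mem_cons.1 hz with rfl | hz
    · simp
    · rcases ih hz with ⟨h1, h2⟩ | ⟨h1, h2⟩
      · exact Or.inl ⟨h1, h2⟩
      · exact Or.inr ⟨h1, List.mem_cons_of_mem _ h2⟩

lemma pairwise_gt_forall {x : ℕ} {c : List ℕ} (h : (x :: c).Pairwise (· > ·)) :
    ∀ z ∈ c, z < x := fun z hz => (List.pairwise_cons.1 h).1 z hz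

lemma pairwise_ge_forall {y : ℕ} {d : List ℕ} (h : (y :: d).Pairwise (· ≥ ·)) :
    ∀ z ∈ y :: d, z ≤ y := by
  intro z hz
  rcases List.mem_cons.1 hz with rfl | hz
  · exact le_refl _
  · exact (List.pairwise_cons.1 h).1 z hz

lemma forall_le_of_pairwise_gt {x : ℕ} {c : List ℕ} (h : (x :: c).Pairwise (· > ·)) :
    ∀ z ∈ x :: c, z ≤ x := by
  intro z hz
  rcases List.mem_cons.1 hz with rfl | hz
  · exact le_refl _
  · exact le_of_lt ((List.pairwise_cons.1 h).1 z hz)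

lemma mergeL_pairwise : ∀ {c d : List ℕ}, c.Pairwise (· > ·) → d.Pairwise (· ≥ ·) →
    (mergeL c d).Pairwise RL := by
  intro c d hc hd
  induction c, d using mergeL.induct with
  | case1 d =>
    rw [mergeL, List.pairwise_map]
    exact hd.imp fun {a b} hab => by
      rcases Nat.lt_or_ge b a with h | h
      · exact Or.inl h
      · exact Or.inr ⟨le_antisymm h hab, rfl⟩
  | case2 x c ih =>
    rw [mergeL, List.pairwise_cons]
    refine ⟨fun z hz => ?_, ih (List.pairwise_cons.1 hc).2 hd⟩
    rcases mergeL_mem hz with ⟨h1, h2⟩ | ⟨h1, h2⟩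
    · exact Or.inl (pairwise_gt_forall hc _ h2)
    · simp at h2
  | case3 x c y d h ih =>
    rw [mergeL, if_pos h, List.pairwise_cons]
    refine ⟨fun z hz => ?_, ih (List.pairwise_cons.1 hc).2 hd⟩
    rcases mergeL_mem hz with ⟨h1, h2⟩ | ⟨h1, h2⟩
    · exact Or.inl (pairwise_gt_forall hc _ h2)
    · exact Or.inl (lt_of_le_of_lt (pairwise_ge_forall hd _ h2) h)
  | case4 x c y d h ih =>
    rw [mergeL, if_neg h, List.pairwise_cons]
    refine ⟨fun z hz => ?_, ih hc (List.pairwise_cons.1 hd).2⟩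
    have hzy : z.1 ≤ y := by
      rcases mergeL_mem hz with ⟨h1, h2⟩ | ⟨h1, h2⟩
      · exact le_trans (forall_le_of_pairwise_gt hc _ h2) (not_lt.1 h)
      · exact (List.pairwise_cons.1 hd).1 _ h2 |>.le.trans (le_refl y) |>.trans (le_refl y)
    rcases Nat.lt_or_ge z.1 y with h' | h'
    · exact Or.inl h'
    · exact Or.inr ⟨le_antisymm h' hzy, rfl⟩

lemma mergeB_pairwise : ∀ {c d : List ℕ}, c.Pairwise (· > ·) → d.Pairwise (· ≥ ·) →
    (mergeB c d).Pairwise RB := by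
  intro c d hc hd
  induction c, d using mergeB.induct with
  | case1 d =>
    rw [mergeB, List.pairwise_map]
    exact hd.imp fun {a b} hab => by
      rcases Nat.lt_or_ge b a with h | h
      · exact Or.inl h
      · exact Or.inr ⟨le_antisymm h hab, rfl⟩
  | case2 x c ih =>
    rw [mergeB, List.pairwise_cons]
    refine ⟨fun z hz => ?_, ih (List.pairwise_cons.1 hc).2 hd⟩
    rcases mergeB_mem hz with ⟨h1, h2⟩ | ⟨h1, h2⟩
    · exact Or.inl (pairwise_gt_forall hc _ h2)
    · simp at h2
  | case3 x c y d h ih =>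
    rw [mergeB, if_pos h, List.pairwise_cons]
    refine ⟨fun z hz => ?_, ih (List.pairwise_cons.1 hc).2 hd⟩
    rcases mergeB_mem hz with ⟨h1, h2⟩ | ⟨h1, h2⟩
    · exact Or.inl (pairwise_gt_forall hc _ h2)
    · have : z.1 ≤ x := le_trans (pairwise_ge_forall hd _ h2) h
      rcases Nat.lt_or_ge z.1 x with h' | h'
      · exact Or.inl h'
      · exact Or.inr ⟨le_antisymm h' this, h1⟩
  | case4 x c y d h ih =>
    rw [mergeB, if_neg h, List.pairwise_cons]
    refine ⟨fun z hz => ?_, ih hc (List.pairwise_cons.1 hd).2⟩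
    rcases mergeB_mem hz with ⟨h1, h2⟩ | ⟨h1, h2⟩
    · exact Or.inl (lt_of_le_of_lt (forall_le_of_pairwise_gt hc _ h2) (not_le.1 h))
    · have : z.1 ≤ y := (List.pairwise_cons.1 hd).1 _ h2
      rcases Nat.lt_or_ge z.1 y with h' | h'
      · exact Or.inl h'
      · exact Or.inr ⟨le_antisymm h' this, h1⟩

lemma mergeL_self {l : List (ℕ × Bool)} (h : l.Pairwise RL) :
    mergeL (olList l) (nolList l) = l := by
  induction l with
  | nil => simp [olList, nolList, mergeL]
  | cons x t ih =>
    obtain ⟨x1, x2⟩ := x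
    have hfa := (List.pairwise_cons.1 h).1
    have ht := (List.pairwise_cons.1 h).2
    have hmem : ∀ z ∈ t, z.1 ≤ x1 := by
      intro z hz; rcases hfa z hz with h' | ⟨h', _⟩ <;> omega
    cases x2 with
    | true =>
      have holc : olList ((x1, true) :: t) = x1 :: olList t := by
        simp [olList, List.filter_cons]
      have hnolc : nolList ((x1, true) :: t) = nolList t := by
        simp [nolList, List.filter_cons]
      rw [holc, hnolc]
      have hlt : ∀ z ∈ nolList t, z < x1 := by
        intro z hz
        simp only [nolList, List.mem_map, List.mem_filter] at hz
        obtain ⟨w, ⟨hw, _⟩, rfl⟩ := hz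
        rcases hfa w hw with h' | ⟨_, h'⟩
        · exact h'
        · simp at h'
      cases hn : nolList t with
      | nil =>
        rw [mergeL, ← hn, ih ht]
      | cons z zs =>
        rw [mergeL, if_pos (hlt z (hn ▸ (List.mem_cons_self (a := z) (l := zs)))), ← hn, ih ht]
    | false =>
      have holc : olList ((x1, false) :: t) = olList t := by
        simp [olList, List.filter_cons]
      have hnolc : nolList ((x1, false) :: t) = x1 :: nolList t := by
        simp [nolList, List.filter_cons]
      rw [holc, hnolc]
      have hle : ∀ z ∈ olList t, z ≤ x1 := by
        intro z hz
        simp only [olList, List.mem_map, List.mem_filter] at hz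
        obtain ⟨w, ⟨hw, _⟩, rfl⟩ := hz
        exact hmem w hw
      cases ho : olList t with
      | nil =>
        have he : mergeL [] (nolList t) = List.map (fun y => (y, false)) (nolList t) := by
          rw [mergeL]
        rw [mergeL, List.map_cons, ← he, ← ho, ih ht]
      | cons z zs =>
        rw [mergeL, if_neg (not_lt.2 (hle z (ho ▸ (List.mem_cons_self (a := z) (l := zs))))), ← ho, ih ht]

lemma mergeB_self {l : List (ℕ × Bool)} (h : l.Pairwise RB) :
    mergeB (olList l) (nolList l) = l := by
  induction l with
  | nil => simp [olList, nolList, mergeB]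
  | cons x t ih =>
    obtain ⟨x1, x2⟩ := x
    have hfa := (List.pairwise_cons.1 h).1
    have ht := (List.pairwise_cons.1 h).2
    have hmem : ∀ z ∈ t, z.1 ≤ x1 := by
      intro z hz; rcases hfa z hz with h' | ⟨h', _⟩ <;> omega
    cases x2 with
    | true =>
      have holc : olList ((x1, true) :: t) = x1 :: olList t := by
        simp [olList, List.filter_cons]
      have hnolc : nolList ((x1, true) :: t) = nolList t := by
        simp [nolList, List.filter_cons]
      rw [holc, hnolc]
      have hle : ∀ z ∈ nolList t, z ≤ x1 := by
        intro z hz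
        simp only [nolList, List.mem_map, List.mem_filter] at hz
        obtain ⟨w, ⟨hw, _⟩, rfl⟩ := hz
        exact hmem w hw
      cases hn : nolList t with
      | nil =>
        rw [mergeB, ← hn, ih ht]
      | cons z zs =>
        rw [mergeB, if_pos (hle z (hn ▸ (List.mem_cons_self (a := z) (l := zs)))), ← hn, ih ht]
    | false =>
      have holc : olList ((x1, false) :: t) = olList t := by
        simp [olList, List.filter_cons]
      have hnolc : nolList ((x1, false) :: t) = x1 :: nolList t := by
        simp [nolList, List.filter_cons]
      rw [holc, hnolc]
      have hlt : ∀ z ∈ olList t, z < x1 := by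
        intro z hz
        simp only [olList, List.mem_map, List.mem_filter] at hz
        obtain ⟨w, ⟨hw, hw2⟩, rfl⟩ := hz
        rcases hfa w hw with h' | ⟨_, h'⟩
        · exact h'
        · simp [h'] at hw2
      cases ho : olList t with
      | nil =>
        have he : mergeB [] (nolList t) = List.map (fun y => (y, false)) (nolList t) := by
          rw [mergeB]
        rw [mergeB, List.map_cons, ← he, ← ho, ih ht]
      | cons z zs =>
        rw [mergeB, if_neg (not_le.2 (hlt z (ho ▸ (List.mem_cons_self (a := z) (l := zs))))), ← ho, ih ht]


def tri : ℕ → ℕ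
  | 0 => 0
  | n + 1 => tri n + n

def addStair (s : ℕ) : List ℕ → List ℕ
  | [] => []
  | x :: t => (x + (t.length + s)) :: addStair s t

def subStair (s : ℕ) : List ℕ → List ℕ
  | [] => []
  | x :: t => (x - (t.length + s)) :: subStair s t

@[simp] lemma addStair_length (s : ℕ) : ∀ t : List ℕ, (addStair s t).length = t.length
  | [] => rfl
  | x :: t => by simp [addStair, addStair_length s t]

@[simp] lemma subStair_length (s : ℕ) : ∀ t : List ℕ, (subStair s t).length = t.length
  | [] => rfl
  | x :: t => by simp [subStair, subStair_length s t]

lemma addStair_sum (s : ℕ) : ∀ t : List ℕ,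
    (addStair s t).sum = t.sum + tri t.length + s * t.length
  | [] => by simp [addStair, tri]
  | x :: t => by
    have ih := addStair_sum s t
    simp only [addStair, List.sum_cons, List.length_cons, tri, Nat.mul_succ, ih]
    omega

lemma addStair_chain' (s : ℕ) : ∀ t : List ℕ,
    t.Chain' (· ≥ ·) ↔ (addStair s t).Chain' (· > ·)
  | [] => by simp [addStair, List.Chain']
  | [x] => by simp [addStair, List.Chain']
  | x :: y :: t => by
    have ih := addStair_chain' s (y :: t)
    rw [show addStair s (x :: y :: t)
        = (x + ((y :: t).length + s)) :: addStair s (y :: t) from rfl] at *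
    rw [show addStair s (y :: t) = (y + (t.length + s)) :: addStair s t from rfl] at *
    simp only [List.Chain'] at ih ⊢
    rw [List.isChain_cons_cons, List.isChain_cons_cons]
    constructor
    · rintro ⟨h1, h2⟩
      exact ⟨by simp only [List.length_cons]; omega, ih.1 h2⟩
    · rintro ⟨h1, h2⟩
      refine ⟨?_, ih.2 h2⟩
      simp only [List.length_cons] at h1; omega

lemma subStair_addStair (s : ℕ) : ∀ t : List ℕ, subStair s (addStair s t) = t
  | [] => rfl
  | x :: t => by
    simp only [addStair, subStair, addStair_length, subStair_addStair s t]
    congr 1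
    omega

lemma addStair_mem {s z : ℕ} : ∀ {t : List ℕ}, z ∈ addStair s t → s ≤ z := by
  intro t
  induction t with
  | nil => simp [addStair]
  | cons x t ih =>
    intro hz
    rcases List.mem_cons.1 hz with h | h
    · omega
    · exact ih h

lemma stair_head_le {s : ℕ} : ∀ {t : List ℕ} {x : ℕ},
    ((x :: t).Chain' (· > ·)) → (∀ z ∈ x :: t, s ≤ z) → t.length + s ≤ x := by
  intro t
  induction t with
  | nil => intro x _ hz; simpa using hz x (by simp)
  | cons y t ih =>
    intro x hc hz
    have h1 : x > y := (List.isChain_cons_cons.1 hc).1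
    have h2 := ih (List.isChain_cons_cons.1 hc).2 (fun z hz' => hz z (List.mem_cons_of_mem _ hz'))
    simp only [List.length_cons]; omega

lemma addStair_subStair {s : ℕ} : ∀ {l : List ℕ},
    l.Chain' (· > ·) → (∀ z ∈ l, s ≤ z) → addStair s (subStair s l) = l := by
  intro l
  induction l with
  | nil => intro _ _; rfl
  | cons x t ih =>
    intro hc hs
    have hx : t.length + s ≤ x := stair_head_le hc hs
    simp only [subStair, addStair, subStair_length]
    rw [ih hc.tail (fun z hz => hs z (List.mem_cons_of_mem _ hz))]
    congr 1
    omega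

def conjK (K : ℕ) (l : List ℕ) : List ℕ :=
  (List.range K).map fun k => (l.filter fun x => decide (k < x)).length

@[simp] lemma conjK_length (K : ℕ) (l : List ℕ) : (conjK K l).length = K := by
  simp [conjK]

lemma conjK_pairwise (K : ℕ) (l : List ℕ) : (conjK K l).Pairwise (· ≥ ·) := by
  rw [conjK, List.pairwise_map]
  refine (List.pairwise_lt_range (n := K)).imp ?_
  intro a b hab
  exact List.Sublist.length_le (List.monotone_filter_right l (fun z hz => by
    simp at hz ⊢; omega))

lemma conjK_mem_le {K : ℕ} {l : List ℕ} {z : ℕ} (hz : z ∈ conjK K l) : z ≤ l.length := by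
  rw [conjK, List.mem_map] at hz
  obtain ⟨k, _, rfl⟩ := hz
  exact List.length_filter_le _ _

lemma conjK_mem_pos {l : List ℕ} {z : ℕ} (hz : z ∈ conjK (l.headD 0) l) : 1 ≤ z := by
  rw [conjK, List.mem_map] at hz
  obtain ⟨k, hk, rfl⟩ := hz
  rw [List.mem_range] at hk
  cases l with
  | nil => simp at hk
  | cons x t =>
    have : x ∈ (x :: t).filter fun z => decide (k < z) := by
      rw [List.mem_filter]
      exact ⟨by simp, by simpa using hk⟩
    have := List.length_pos_iff.2 (List.ne_nil_of_mem this)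
    omega

lemma count_lt_iff : ∀ {l : List ℕ}, l.Pairwise (· ≥ ·) → ∀ {i : ℕ}, i < l.length →
    ∀ {k : ℕ}, (i < (l.filter fun x => decide (k < x)).length ↔ k < l.getD i 0) := by
  intro l
  induction l with
  | nil => intro _ i hi; simp at hi
  | cons x t ih =>
    intro h i hi k
    have hall : ∀ z ∈ t, z ≤ x := (List.pairwise_cons.1 h).1
    by_cases hkx : k < x
    · rw [List.filter_cons_of_pos (by simpa using hkx)]
      cases i with
      | zero => simpa using hkx
      | succ i =>
        have hit : i < t.length := by simpa using hi
        simpa using ih (List.pairwise_cons.1 h).2 hit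
    · have ht : t.filter (fun x => decide (k < x)) = [] := by
        rw [List.filter_eq_nil_iff]
        intro z hz
        simp only [decide_eq_true_eq]
        have := hall z hz; omega
      rw [List.filter_cons_of_neg (by simpa using hkx), ht]
      simp only [List.length_nil, Nat.not_lt_zero, false_iff, not_lt]
      cases i with
      | zero => simpa using Nat.le_of_not_lt hkx
      | succ i =>
        have hit : i < t.length := by simpa using hi
        have : t.getD i 0 ∈ t := by
          rw [List.getD_eq_getElem _ _ hit]
          exact List.getElem_mem _
        have := hall _ this
        simp only [List.getD_cons_succ]
        omega

lemma count_le_iff : ∀ {l : List ℕ}, l.Pairwise (· ≥ ·) → ∀ {i : ℕ}, i < l.length →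
    ∀ {k : ℕ}, (i < (l.filter fun x => decide (k ≤ x)).length ↔ k ≤ l.getD i 0) := by
  intro l
  induction l with
  | nil => intro _ i hi; simp at hi
  | cons x t ih =>
    intro h i hi k
    have hall : ∀ z ∈ t, z ≤ x := (List.pairwise_cons.1 h).1
    by_cases hkx : k ≤ x
    · rw [List.filter_cons_of_pos (by simpa using hkx)]
      cases i with
      | zero => simpa using hkx
      | succ i =>
        have hit : i < t.length := by simpa using hi
        simpa using ih (List.pairwise_cons.1 h).2 hit
    · have ht : t.filter (fun x => decide (k ≤ x)) = [] := by
        rw [List.filter_eq_nil_iff]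
        intro z hz
        simp only [decide_eq_true_eq]
        have := hall z hz; omega
      rw [List.filter_cons_of_neg (by simpa using hkx), ht]
      simp only [List.length_nil, Nat.not_lt_zero, false_iff, not_le]
      cases i with
      | zero => simpa using Nat.lt_of_not_le hkx
      | succ i =>
        have hit : i < t.length := by simpa using hi
        have : t.getD i 0 ∈ t := by
          rw [List.getD_eq_getElem _ _ hit]
          exact List.getElem_mem _
        have := hall _ this
        simp only [List.getD_cons_succ]
        omega

lemma range_filter_lt_length (x : ℕ) : ∀ K : ℕ,
    ((List.range K).filter fun k => decide (k < x)).length = min x K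
  | 0 => by simp
  | K + 1 => by
    rw [List.range_succ, List.filter_append]
    have := range_filter_lt_length x K
    by_cases h : K < x <;> simp [h, this] <;> omega

lemma sum_map_add {α : Type*} (l : List α) (f g : α → ℕ) :
    (l.map fun k => f k + g k).sum = (l.map f).sum + (l.map g).sum := by
  induction l with
  | nil => simp
  | cons x t ih => simp [ih]; omega

lemma sum_map_ite (x : ℕ) : ∀ K : ℕ,
    ((List.range K).map fun k => if k < x then 1 else 0).sum = min x K
  | 0 => by simp
  | K + 1 => by
    rw [List.range_succ, List.map_append]
    have := sum_map_ite x K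
    by_cases h : K < x <;> simp [h, this] <;> omega

lemma conjK_sum {K : ℕ} : ∀ {l : List ℕ}, (∀ z ∈ l, z ≤ K) → (conjK K l).sum = l.sum := by
  intro l
  induction l with
  | nil => simp [conjK]
  | cons x t ih =>
    intro hb
    have hx : x ≤ K := hb x (by simp)
    have hstep : ∀ k, ((x :: t).filter fun z => decide (k < z)).length
        = (if k < x then 1 else 0) + (t.filter fun z => decide (k < z)).length := by
      intro k
      by_cases h : k < x
      · rw [List.filter_cons_of_pos (by simpa using h)]; simp [h]; omega
      · rw [List.filter_cons_of_neg (by simpa using h)]; simp [h]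
    rw [conjK, List.map_congr_left (fun k _ => hstep k), sum_map_add, sum_map_ite]
    rw [conjK] at ih
    rw [ih (fun z hz => hb z (List.mem_cons_of_mem _ hz))]
    simp [List.sum_cons]
    omega


lemma getD_le_headD {l : List ℕ} (h : l.Pairwise (· ≥ ·)) {i : ℕ} (hi : i < l.length) :
    l.getD i 0 ≤ l.headD 0 := by
  cases l with
  | nil => simp at hi
  | cons x t =>
    cases i with
    | zero => simp
    | succ i =>
      have hit : i < t.length := by simpa using hi
      have hm : t.getD i 0 ∈ t := by
        rw [List.getD_eq_getElem _ _ hit]; exact List.getElem_mem _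
      simpa using (List.pairwise_cons.1 h).1 _ hm

lemma conjK_getElem (K : ℕ) (l : List ℕ) {i : ℕ} (h1 : i < (conjK K l).length) :
    (conjK K l)[i] = (l.filter fun x => decide (i < x)).length := by
  simp [conjK]

lemma conjK_roundtrip₁ {l : List ℕ} (h : l.Pairwise (· ≥ ·)) :
    conjK l.length (conjK (l.headD 0) l) = l := by
  refine List.ext_getElem (by simp) ?_
  intro i h1 h2
  have hi : i < l.length := by simpa using h2
  rw [conjK_getElem _ _ h1, conjK, List.filter_map, List.length_map,
      List.filter_congr (fun k _ => show ((fun x => decide (i < x)) ∘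
        fun k => (l.filter fun x => decide (k < x)).length) k
          = decide (k < l.getD i 0) from by
        simp only [Function.comp]
        exact decide_eq_decide.2 (count_lt_iff h hi)),
      range_filter_lt_length, List.getD_eq_getElem _ _ hi]
  exact Nat.min_eq_left (by
    have := getD_le_headD h hi
    rw [List.getD_eq_getElem _ _ hi] at this
    exact this)

lemma conjK_roundtrip₂ {N : ℕ} {β : List ℕ} (h : β.Pairwise (· ≥ ·))
    (hpos : ∀ z ∈ β, 1 ≤ z) (hle : ∀ z ∈ β, z ≤ N) :
    conjK ((conjK N β).headD 0) (conjK N β) = β := by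
  cases N with
  | zero =>
    have hβ : β = [] := by
      cases β with
      | nil => rfl
      | cons x t =>
        have h1 := hle x (by simp); have h2 := hpos x (by simp); omega
    subst hβ; simp [conjK]
  | succ M =>
    have hhead : (conjK (M + 1) β).headD 0 = β.length := by
      rw [conjK, List.range_succ_eq_map]
      simp only [List.map_cons, List.headD_cons]
      rw [List.filter_eq_self.2 (fun z hz => by have := hpos z hz; simp; omega)]
    refine List.ext_getElem (by rw [conjK_length, hhead]) ?_
    intro k h1 h2
    have hk : k < β.length := by simpa using h2
    rw [conjK_getElem _ _ h1, conjK, List.filter_map, List.length_map,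
        List.filter_congr (fun i _ => show ((fun x => decide (k < x)) ∘
          fun i => (β.filter fun x => decide (i < x)).length) i
            = decide (i < β.getD k 0) from by
          simp only [Function.comp]
          exact decide_eq_decide.2 (count_lt_iff h hk)),
        range_filter_lt_length, List.getD_eq_getElem _ _ hk]
    refine Nat.min_eq_left ?_
    exact hle _ (List.getElem_mem _)


lemma olList_length (l : List (ℕ × Bool)) : (olList l).length = opOverlined l := by
  simp [olList, opOverlined]

lemma mem_le_headD {l : List ℕ} (h : l.Pairwise (· ≥ ·)) {z : ℕ} (hz : z ∈ l) :
    z ≤ l.headD 0 := by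
  cases l with
  | nil => simp at hz
  | cons x t =>
    rcases List.mem_cons.1 hz with rfl | hz
    · simp
    · simpa using (List.pairwise_cons.1 h).1 _ hz

lemma sum_map_add_const (N : ℕ) (t : List ℕ) :
    (t.map (· + N)).sum = t.sum + N * t.length := by
  induction t with
  | nil => simp
  | cons x t ih => simp [ih, Nat.mul_succ]; omega

lemma sum_map_sub_const (N : ℕ) {t : List ℕ} (h : ∀ x ∈ t, N ≤ x) :
    (t.map (· - N)).sum + N * t.length = t.sum := by
  induction t with
  | nil => simp
  | cons x t ih =>
    have h1 := h x (by simp)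
    have h2 := ih (fun z hz => h z (List.mem_cons_of_mem _ hz))
    simp [Nat.mul_succ]
    omega

lemma two_tri (j : ℕ) : 2 * tri j + j = j * j := by
  induction j with
  | zero => simp [tri]
  | succ j ih => simp [tri, Nat.mul_succ, Nat.succ_mul, Nat.mul_add]; omega

lemma tri_identity' : ∀ m j : ℕ, tri m + m + (j + m) * j = (j + m) + tri (j + m) + tri j
  | 0, j => by
    simp only [tri, Nat.add_zero, Nat.zero_add]
    have := two_tri j
    linarith
  | m + 1, j => by
    have ih := tri_identity' m j
    have h1 : (j + (m + 1)) * j = (j + m) * j + j := by ring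
    have h2 : tri (j + (m + 1)) = tri (j + m) + (j + m) := by
      rw [show j + (m + 1) = (j + m) + 1 by omega]; rfl
    rw [show tri (m + 1) = tri m + m from rfl, h1, h2]
    linarith

lemma tri_identity {j N : ℕ} (hj : j ≤ N) :
    tri (N - j) + (N - j) + N * j = N + tri N + tri j := by
  obtain ⟨m, rfl⟩ := Nat.exists_eq_add_of_le hj
  have := tri_identity' m j
  have h1 : j + m - j = m := by omega
  rw [h1]
  linarith

lemma genDurfee_eq_of {l : List (ℕ × Bool)} {N : ℕ}
    (hP : N ≤ (olList l).length + ((nolList l).filter fun p => decide (N ≤ p)).length)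
    (hnext : (olList l).length +
      ((nolList l).filter fun p => decide (N + 1 ≤ p)).length < N + 1) :
    genDurfeeSize l = N := by
  rw [genDurfeeSize, Nat.findGreatest_eq_iff]
  have hc := List.length_filter_le (fun p => decide (N ≤ p)) (nolList l)
  have hlo := length_ol_add_nol l
  refine ⟨by omega, fun _ => hP, ?_⟩
  intro M hM _
  have hmono : ((nolList l).filter fun p => decide (M ≤ p)).length
      ≤ ((nolList l).filter fun p => decide (N + 1 ≤ p)).length :=
    List.Sublist.length_le (List.monotone_filter_right _ (fun z hz => by
      simp at hz ⊢; omega))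
  intro hPM
  omega

lemma genDurfee_facts {l : List (ℕ × Bool)} {N : ℕ} (hg : genDurfeeSize l = N) :
    N ≤ (olList l).length + ((nolList l).filter fun p => decide (N ≤ p)).length ∧
    (olList l).length + ((nolList l).filter fun p => decide (N + 1 ≤ p)).length ≤ N := by
  rw [genDurfeeSize, Nat.findGreatest_eq_iff] at hg
  obtain ⟨hle, hPN, hmax⟩ := hg
  have hlo := length_ol_add_nol l
  have hc := List.length_filter_le (fun p => decide (N + 1 ≤ p)) (nolList l)
  constructor
  · rcases Nat.eq_zero_or_pos N with rfl | hN
    · omega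
    · exact hPN (by omega)
  · by_cases hN1 : N + 1 ≤ l.length
    · have := hmax (Nat.lt_succ_self N) hN1
      simp only [Nat.succ_eq_add_one] at this
      omega
    · omega

def phiList (N : ℕ) (top : List ℕ) (bot : List (ℕ × Bool)) : List (ℕ × Bool) :=
  mergeL (addStair 1 (nolList bot))
    (((subStair 0 (olList bot)).map (· + N)) ++
      conjK ((subStair 0 top).headD 0) (subStair 0 top))

def psiTop (N j : ℕ) (l : List (ℕ × Bool)) : List ℕ :=
  addStair 0 (conjK N ((nolList l).drop j))

def psiBot (N j : ℕ) (l : List (ℕ × Bool)) : List (ℕ × Bool) :=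
  mergeB (addStair 0 (((nolList l).take j).map (· - N))) (subStair 1 (olList l))



lemma merged_spec {N j : ℕ} (hj : j ≤ N) (o μ : List ℕ)
    (hop : o.Pairwise (· > ·)) (hμp : μ.Pairwise (· ≥ ·))
    (hopos : ∀ z ∈ o, 1 ≤ z) (hμpos : ∀ z ∈ μ, 1 ≤ z)
    (hol : o.length = N - j)
    (hcnt1 : j ≤ (μ.filter fun p => decide (N ≤ p)).length)
    (hcnt2 : (μ.filter fun p => decide (N + 1 ≤ p)).length ≤ j) :
    IsOverpartition (mergeL o μ) ∧ genDurfeeSize (mergeL o μ) = N ∧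
    opOverlined (mergeL o μ) = N - j ∧
    opWeight (mergeL o μ) = o.sum + μ.sum := by
  have hpw := mergeL_pairwise hop hμp
  refine ⟨⟨?_, List.isChain_iff_pairwise.2 hpw⟩, ?_, ?_, ?_⟩
  · intro p hp
    rcases mergeL_mem hp with ⟨_, h⟩ | ⟨_, h⟩
    · exact hopos _ h
    · exact hμpos _ h
  · refine genDurfee_eq_of ?_ ?_ <;>
      rw [mergeL_olList, mergeL_nolList, hol] <;> omega
  · rw [← olList_length, mergeL_olList, hol]
  · rw [opWeight, mergeL_sum]

lemma phi_spec {N j : ℕ} (hj : j ≤ N) (a : List ℕ) (bot : List (ℕ × Bool))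
    (ha : a.Chain' (· > ·)) (hbot : bot.Pairwise RB)
    (hN : a.length = N) (hlen : bot.length = N)
    (hov : (bot.filter fun p => p.2).length = j) :
    IsOverpartition (phiList N a bot) ∧
    opWeight (phiList N a bot) = N + a.sum + (bot.map Prod.fst).sum ∧
    genDurfeeSize (phiList N a bot) = N ∧
    opOverlined (phiList N a bot) = N - j := by
  have hcp : (olList bot).Pairwise (· > ·) := olList_pairwise_RB hbot
  have hdp : (nolList bot).Pairwise (· ≥ ·) := nolList_pairwise_RB hbot
  have hlc : (olList bot).length = j := by
    rw [olList_length]; exact hov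
  have hlad := length_ol_add_nol bot
  have hld : (nolList bot).length = N - j := by omega
  -- top staircase
  have haS : addStair 0 (subStair 0 a) = a := addStair_subStair ha (by simp)
  have haC : (addStair 0 (subStair 0 a)).Chain' (· > ·) := by rw [haS]; exact ha
  have hatp : (subStair 0 a).Pairwise (· ≥ ·) :=
    List.isChain_iff_pairwise.1 ((addStair_chain' 0 (subStair 0 a)).2 haC)
  have hatl : (subStair 0 a).length = N := by simp [hN]
  -- c staircase
  have hcS : addStair 0 (subStair 0 (olList bot)) = olList bot :=
    addStair_subStair (List.isChain_iff_pairwise.2 hcp) (by simp)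
  have hcC : (addStair 0 (subStair 0 (olList bot))).Chain' (· > ·) := by
    rw [hcS]; exact List.isChain_iff_pairwise.2 hcp
  have hαp : (subStair 0 (olList bot)).Pairwise (· ≥ ·) :=
    List.isChain_iff_pairwise.1 ((addStair_chain' 0 _).2 hcC)
  have hαl : (subStair 0 (olList bot)).length = j := by simp [hlc]
  -- β facts
  have hβp := conjK_pairwise ((subStair 0 a).headD 0) (subStair 0 a)
  have hβpos : ∀ z ∈ conjK ((subStair 0 a).headD 0) (subStair 0 a), 1 ≤ z :=
    fun z hz => conjK_mem_pos hz
  have hβle : ∀ z ∈ conjK ((subStair 0 a).headD 0) (subStair 0 a), z ≤ N :=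
    fun z hz => by have := conjK_mem_le hz; omega
  have hβsum : (conjK ((subStair 0 a).headD 0) (subStair 0 a)).sum = (subStair 0 a).sum :=
    conjK_sum (fun z hz => mem_le_headD hatp hz)
  -- A facts
  have hAp : ((subStair 0 (olList bot)).map (· + N)).Pairwise (· ≥ ·) := by
    rw [List.pairwise_map]
    exact hαp.imp (by intro u v h; omega)
  have hAge : ∀ x ∈ (subStair 0 (olList bot)).map (· + N), N ≤ x := by
    intro x hx
    obtain ⟨y, _, rfl⟩ := List.mem_map.1 hx
    omega
  have hApos : ∀ x ∈ (subStair 0 (olList bot)).map (· + N), 1 ≤ x := by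
    intro x hx
    have h1 := hAge x hx
    have h2 : (subStair 0 (olList bot)) ≠ [] := by
      obtain ⟨y, hy, rfl⟩ := List.mem_map.1 hx
      exact List.ne_nil_of_mem hy
    have h3 : 1 ≤ j := by
      have := List.length_pos_iff.2 h2
      omega
    omega
  have hAl : ((subStair 0 (olList bot)).map (· + N)).length = j := by simp [hlc]
  have hAsum : ((subStair 0 (olList bot)).map (· + N)).sum
      = (subStair 0 (olList bot)).sum + N * j := by
    rw [sum_map_add_const, hαl]
  -- μ facts
  have hμp : (((subStair 0 (olList bot)).map (· + N)) ++
      conjK ((subStair 0 a).headD 0) (subStair 0 a)).Pairwise (· ≥ ·) :=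
    List.pairwise_append.2 ⟨hAp, hβp, fun x hx y hy => le_trans (hβle y hy) (hAge x hx)⟩
  have hμpos : ∀ z ∈ ((subStair 0 (olList bot)).map (· + N)) ++
      conjK ((subStair 0 a).headD 0) (subStair 0 a), 1 ≤ z := by
    intro z hz
    rcases List.mem_append.1 hz with h | h
    · exact hApos _ h
    · exact hβpos _ h
  -- o facts
  have hop : (addStair 1 (nolList bot)).Pairwise (· > ·) :=
    List.isChain_iff_pairwise.1 ((addStair_chain' 1 _).1 (List.isChain_iff_pairwise.2 hdp))
  have hopos : ∀ z ∈ addStair 1 (nolList bot), 1 ≤ z := fun z hz => addStair_mem hz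
  have holen : (addStair 1 (nolList bot)).length = N - j := by simp [hld]
  -- counts
  have hfA : ((subStair 0 (olList bot)).map (· + N)).filter (fun p => decide (N ≤ p))
      = (subStair 0 (olList bot)).map (· + N) :=
    List.filter_eq_self.2 (fun z hz => by simpa using hAge z hz)
  have hfβ : (conjK ((subStair 0 a).headD 0) (subStair 0 a)).filter
      (fun p => decide (N + 1 ≤ p)) = [] :=
    List.filter_eq_nil_iff.2 (fun z hz => by have := hβle z hz; simp; omega)
  have hcnt1 : j ≤ ((((subStair 0 (olList bot)).map (· + N)) ++
      conjK ((subStair 0 a).headD 0) (subStair 0 a)).filter fun p => decide (N ≤ p)).length := by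
    rw [List.filter_append, List.length_append, hfA, hAl]
    omega
  have hcnt2 : ((((subStair 0 (olList bot)).map (· + N)) ++
      conjK ((subStair 0 a).headD 0) (subStair 0 a)).filter
        fun p => decide (N + 1 ≤ p)).length ≤ j := by
    rw [List.filter_append, List.length_append, hfβ]
    have := List.length_filter_le (fun p => decide (N + 1 ≤ p))
      ((subStair 0 (olList bot)).map (· + N))
    simp only [List.length_nil]
    omega
  obtain ⟨h1, h2, h3, h4⟩ := merged_spec hj _ _ hop hμp hopos hμpos holen hcnt1 hcnt2
  refine ⟨h1, ?_, h2, h3⟩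
  simp only [phiList] at h4 ⊢
  rw [h4, List.sum_append, addStair_sum, hAsum, hβsum, hld]
  have hasum : a.sum = (subStair 0 a).sum + tri N := by
    conv_lhs => rw [← haS]
    rw [addStair_sum, hatl]; omega
  have hbsum : (bot.map Prod.fst).sum = (olList bot).sum + (nolList bot).sum := by
    conv_lhs => rw [← mergeB_self hbot]
    exact mergeB_sum _ _
  have hcsum : (olList bot).sum = (subStair 0 (olList bot)).sum + tri j := by
    conv_lhs => rw [← hcS]
    rw [addStair_sum, hαl]; omega
  rw [hasum, hbsum, hcsum]
  have := tri_identity hj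
  linarith

lemma psi_spec {N j : ℕ} (hj : j ≤ N) (l : List (ℕ × Bool))
    (hl : IsOverpartition l) (hg : genDurfeeSize l = N) (hov : opOverlined l = N - j) :
    (psiTop N j l).Chain' (· > ·) ∧ (psiBot N j l).Pairwise RB ∧
    (psiTop N j l).length = (psiBot N j l).length ∧
    (psiTop N j l).length = N ∧
    ((psiBot N j l).filter fun p => p.2).length = j ∧
    N + (psiTop N j l).sum + ((psiBot N j l).map Prod.fst).sum = opWeight l := by
  have hlp : l.Pairwise RL := List.isChain_iff_pairwise.1 hl.2
  have hpos := hl.1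
  have hop : (olList l).Pairwise (· > ·) := olList_pairwise_RL hlp
  have hμp : (nolList l).Pairwise (· ≥ ·) := nolList_pairwise_RL hlp
  have hopos : ∀ z ∈ olList l, 1 ≤ z := by
    intro z hz
    simp only [olList, List.mem_map, List.mem_filter] at hz
    obtain ⟨w, ⟨hw, _⟩, rfl⟩ := hz
    exact hpos w hw
  have hr : (olList l).length = N - j := by rw [olList_length]; exact hov
  obtain ⟨hf1, hf2⟩ := genDurfee_facts hg
  have hcnt : j ≤ ((nolList l).filter fun p => decide (N ≤ p)).length := by omega
  have hcnt1 : ((nolList l).filter fun p => decide (N + 1 ≤ p)).length ≤ j := by omega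
  have hjlen : j ≤ (nolList l).length :=
    le_trans hcnt (List.length_filter_le _ _)
  have htakelen : ((nolList l).take j).length = j := by
    simp [List.length_take]; omega
  have htakege : ∀ x ∈ (nolList l).take j, N ≤ x := by
    intro x hx
    obtain ⟨i, hi, rfl⟩ := List.mem_iff_getElem.1 hx
    have hij : i < j := by rw [htakelen] at hi; exact hi
    have hil : i < (nolList l).length := lt_of_lt_of_le hij hjlen
    rw [List.getElem_take]
    have := (count_le_iff hμp hil (k := N)).1 (lt_of_lt_of_le hij hcnt)
    rwa [List.getD_eq_getElem _ _ hil] at this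
  have hdrople : ∀ x ∈ (nolList l).drop j, x ≤ N := by
    intro x hx
    obtain ⟨i, hi, rfl⟩ := List.mem_iff_getElem.1 hx
    have hil : j + i < (nolList l).length := by
      rw [List.length_drop] at hi; omega
    rw [List.getElem_drop]
    by_contra hcon
    push_neg at hcon
    have := (count_le_iff hμp hil (k := N + 1)).2
      (by rw [List.getD_eq_getElem _ _ hil]; omega)
    omega
  have hdropp : ((nolList l).drop j).Pairwise (· ≥ ·) :=
    hμp.sublist (List.drop_sublist _ _)
  have hdroppos : ∀ z ∈ (nolList l).drop j, 1 ≤ z := by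
    intro z hz
    have hz' : z ∈ nolList l := List.mem_of_mem_drop hz
    simp only [nolList, List.mem_map, List.mem_filter] at hz'
    obtain ⟨w, ⟨hw, _⟩, rfl⟩ := hz'
    exact hpos w hw
  -- α̂
  have hαp : (((nolList l).take j).map (· - N)).Pairwise (· ≥ ·) := by
    rw [List.pairwise_map]
    exact (hμp.sublist (List.take_sublist _ _)).imp (by intro u v h; omega)
  have hαl : (((nolList l).take j).map (· - N)).length = j := by
    rw [List.length_map, htakelen]
  -- top
  have hconjp := conjK_pairwise N ((nolList l).drop j)
  have htop_chain : (psiTop N j l).Chain' (· > ·) := by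
    rw [psiTop]
    exact (addStair_chain' 0 _).1 (List.isChain_iff_pairwise.2 hconjp)
  have htoplen : (psiTop N j l).length = N := by simp [psiTop]
  -- c
  have hcchain : (addStair 0 (((nolList l).take j).map (· - N))).Chain' (· > ·) :=
    (addStair_chain' 0 _).1 (List.isChain_iff_pairwise.2 hαp)
  have hcp : (addStair 0 (((nolList l).take j).map (· - N))).Pairwise (· > ·) :=
    List.isChain_iff_pairwise.1 hcchain
  -- d
  have hrec : addStair 1 (subStair 1 (olList l)) = olList l :=
    addStair_subStair (List.isChain_iff_pairwise.2 hop) hopos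
  have hdp : (subStair 1 (olList l)).Pairwise (· ≥ ·) :=
    List.isChain_iff_pairwise.1 ((addStair_chain' 1 _).2
      (by rw [hrec]; exact List.isChain_iff_pairwise.2 hop))
  -- bot
  have hbotp : (psiBot N j l).Pairwise RB := by
    rw [psiBot]; exact mergeB_pairwise hcp hdp
  have hbotlen : (psiBot N j l).length = N := by
    rw [psiBot, mergeB_length]
    simp [htakelen]
    omega
  have hbotov : ((psiBot N j l).filter fun p => p.2).length = j := by
    show opOverlined (psiBot N j l) = j
    rw [← olList_length, psiBot, mergeB_olList, addStair_length, hαl]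
  refine ⟨htop_chain, hbotp, by rw [htoplen, hbotlen], htoplen, hbotov, ?_⟩
  -- weights
  have htopsum : (psiTop N j l).sum = ((nolList l).drop j).sum + tri N := by
    rw [psiTop, addStair_sum, conjK_sum hdrople]
    simp
  have hbsum : ((psiBot N j l).map Prod.fst).sum
      = (addStair 0 (((nolList l).take j).map (· - N))).sum
        + (subStair 1 (olList l)).sum := by
    rw [psiBot]; exact mergeB_sum _ _
  have hcsum : (addStair 0 (((nolList l).take j).map (· - N))).sum
      = (((nolList l).take j).map (· - N)).sum + tri j := by
    rw [addStair_sum, hαl]; omega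
  have hα_sum : (((nolList l).take j).map (· - N)).sum + N * j = ((nolList l).take j).sum := by
    have := sum_map_sub_const N htakege
    rwa [htakelen] at this
  have hosum : (olList l).sum = (subStair 1 (olList l)).sum + tri (N - j) + (N - j) := by
    conv_lhs => rw [← hrec]
    rw [addStair_sum]
    simp only [subStair_length, hr]
    omega
  have hlw : opWeight l = (olList l).sum + (nolList l).sum := by
    rw [opWeight]
    conv_lhs => rw [← mergeL_self hlp]
    exact mergeL_sum _ _
  have hμsplit : (nolList l).sum = ((nolList l).take j).sum + ((nolList l).drop j).sum := by
    conv_lhs => rw [← List.take_append_drop j (nolList l)]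
    exact List.sum_append
  rw [htopsum, hbsum, hcsum, hlw, hosum, hμsplit]
  have := tri_identity hj
  linarith



lemma FrobSym_ext {F G : FrobSym} (h1 : F.top = G.top) (h2 : F.bot = G.bot) : F = G := by
  cases F; cases G
  simp only at h1 h2
  subst h1; subst h2
  rfl

lemma psi_phi {N j : ℕ} (a : List ℕ) (bot : List (ℕ × Bool))
    (ha : a.Chain' (· > ·)) (hbot : bot.Pairwise RB)
    (hN : a.length = N) (hlc : (olList bot).length = j) :
    psiTop N j (phiList N a bot) = a ∧ psiBot N j (phiList N a bot) = bot := by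
  have hcp : (olList bot).Pairwise (· > ·) := olList_pairwise_RB hbot
  have h1 : olList (phiList N a bot) = addStair 1 (nolList bot) := by
    simp only [phiList]; exact mergeL_olList _ _
  have h2 : nolList (phiList N a bot) = ((subStair 0 (olList bot)).map (· + N)) ++
      conjK ((subStair 0 a).headD 0) (subStair 0 a) := by
    simp only [phiList]; exact mergeL_nolList _ _
  have haS : addStair 0 (subStair 0 a) = a := addStair_subStair ha (by simp)
  have haC : (addStair 0 (subStair 0 a)).Chain' (· > ·) := by rw [haS]; exact ha
  have hatp : (subStair 0 a).Pairwise (· ≥ ·) :=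
    List.isChain_iff_pairwise.1 ((addStair_chain' 0 _).2 haC)
  have hAl : ((subStair 0 (olList bot)).map (· + N)).length = j := by simp [hlc]
  constructor
  · rw [psiTop, h2, List.drop_left' hAl]
    have hrt := conjK_roundtrip₁ hatp
    rw [show (subStair 0 a).length = N by simp [hN]] at hrt
    rw [hrt, haS]
  · rw [psiBot, h1, h2, List.take_left' hAl, subStair_addStair, List.map_map]
    have hid : ∀ x ∈ subStair 0 (olList bot), ((· - N) ∘ (· + N)) x = id x := by
      intro x _; simp
    rw [List.map_congr_left hid, List.map_id]
    rw [addStair_subStair (List.isChain_iff_pairwise.2 hcp) (by simp)]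
    exact mergeB_self hbot

lemma phi_psi {N j : ℕ} (hj : j ≤ N) (l : List (ℕ × Bool))
    (hl : IsOverpartition l) (hg : genDurfeeSize l = N) (hov : opOverlined l = N - j) :
    phiList N (psiTop N j l) (psiBot N j l) = l := by
  have hlp : l.Pairwise RL := List.isChain_iff_pairwise.1 hl.2
  have hpos := hl.1
  have hop : (olList l).Pairwise (· > ·) := olList_pairwise_RL hlp
  have hμp : (nolList l).Pairwise (· ≥ ·) := nolList_pairwise_RL hlp
  have hopos : ∀ z ∈ olList l, 1 ≤ z := by
    intro z hz
    simp only [olList, List.mem_map, List.mem_filter] at hz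
    obtain ⟨w, ⟨hw, _⟩, rfl⟩ := hz
    exact hpos w hw
  have hr : (olList l).length = N - j := by rw [olList_length]; exact hov
  obtain ⟨hf1, hf2⟩ := genDurfee_facts hg
  have hcnt : j ≤ ((nolList l).filter fun p => decide (N ≤ p)).length := by omega
  have hcnt1 : ((nolList l).filter fun p => decide (N + 1 ≤ p)).length ≤ j := by omega
  have hjlen : j ≤ (nolList l).length :=
    le_trans hcnt (List.length_filter_le _ _)
  have htakelen : ((nolList l).take j).length = j := by
    simp [List.length_take]; omega
  have htakege : ∀ x ∈ (nolList l).take j, N ≤ x := by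
    intro x hx
    obtain ⟨i, hi, rfl⟩ := List.mem_iff_getElem.1 hx
    have hij : i < j := by rw [htakelen] at hi; exact hi
    have hil : i < (nolList l).length := lt_of_lt_of_le hij hjlen
    rw [List.getElem_take]
    have := (count_le_iff hμp hil (k := N)).1 (lt_of_lt_of_le hij hcnt)
    rwa [List.getD_eq_getElem _ _ hil] at this
  have hdrople : ∀ x ∈ (nolList l).drop j, x ≤ N := by
    intro x hx
    obtain ⟨i, hi, rfl⟩ := List.mem_iff_getElem.1 hx
    have hil : j + i < (nolList l).length := by
      rw [List.length_drop] at hi; omega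
    rw [List.getElem_drop]
    by_contra hcon
    push_neg at hcon
    have := (count_le_iff hμp hil (k := N + 1)).2
      (by rw [List.getD_eq_getElem _ _ hil]; omega)
    omega
  have hdropp : ((nolList l).drop j).Pairwise (· ≥ ·) :=
    hμp.sublist (List.drop_sublist _ _)
  have hdroppos : ∀ z ∈ (nolList l).drop j, 1 ≤ z := by
    intro z hz
    have hz' : z ∈ nolList l := List.mem_of_mem_drop hz
    simp only [nolList, List.mem_map, List.mem_filter] at hz'
    obtain ⟨w, ⟨hw, _⟩, rfl⟩ := hz'
    exact hpos w hw
  simp only [phiList, psiTop, psiBot]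
  rw [mergeB_olList, mergeB_nolList, subStair_addStair, subStair_addStair,
      addStair_subStair (List.isChain_iff_pairwise.2 hop) hopos,
      conjK_roundtrip₂ hdropp hdroppos hdrople, List.map_map]
  have hid : ∀ x ∈ (nolList l).take j, ((· + N) ∘ (· - N)) x = id x := by
    intro x hx
    have := htakege x hx
    simp; omega
  rw [List.map_congr_left hid, List.map_id, List.take_append_drop]
  exact mergeL_self hlp


/-- **Proposition 2.2.** There is a bijection (hence equality of cardinalities)
between overpartitions of `n` whose Frobenius representation has `N` columns and `j`
overlined parts in the bottom row and overpartitions of `n` with generalized Durfee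
square of size `N` and `N - j` overlined parts. -/
theorem frobenius_durfee (n N j : ℕ) (hj : j ≤ N) :
    Nat.card {F : FrobSym //
        frobWeight F = n ∧ frobCols F = N ∧ botOverlined F = j} =
      Nat.card {l : List (ℕ × Bool) //
        IsOverpartition l ∧ opWeight l = n ∧ genDurfeeSize l = N ∧
          opOverlined l = N - j} := by
  refine Nat.card_congr (Equiv.ofBijective
    (fun F => ⟨phiList N F.1.top F.1.bot, ?_⟩) ⟨?_, ?_⟩)
  · obtain ⟨F, hw, hcols, hovF⟩ := F
    have hbotp : F.bot.Pairwise RB := List.isChain_iff_pairwise.1 F.bot_sorted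
    have hN : F.top.length = N := hcols
    have hlen : F.bot.length = N := by rw [← F.len_eq]; exact hN
    obtain ⟨s1, s2, s3, s4⟩ := phi_spec hj F.top F.bot F.top_sorted hbotp hN hlen hovF
    refine ⟨s1, ?_, s3, s4⟩
    rw [s2, ← hw, frobWeight, hN]
  · intro F1 F2 heq
    have heq' : phiList N F1.1.top F1.1.bot = phiList N F2.1.top F2.1.bot :=
      congrArg Subtype.val heq
    have hlc1 : (olList F1.1.bot).length = j := by
      rw [olList_length]; exact F1.2.2.2
    have hlc2 : (olList F2.1.bot).length = j := by
      rw [olList_length]; exact F2.2.2.2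
    have hb1 : F1.1.bot.Pairwise RB := List.isChain_iff_pairwise.1 F1.1.bot_sorted
    have hb2 : F2.1.bot.Pairwise RB := List.isChain_iff_pairwise.1 F2.1.bot_sorted
    have r1 := psi_phi (N := N) (j := j) F1.1.top F1.1.bot F1.1.top_sorted hb1 F1.2.2.1 hlc1
    have r2 := psi_phi (N := N) (j := j) F2.1.top F2.1.bot F2.1.top_sorted hb2 F2.2.2.1 hlc2
    refine Subtype.ext (FrobSym_ext ?_ ?_)
    · rw [← r1.1, ← r2.1, heq']
    · rw [← r1.2, ← r2.2, heq']
  · rintro ⟨l, hl, hwl, hgl, hovl⟩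
    obtain ⟨s1, s2, s3, s4, s5, s6⟩ := psi_spec hj l hl hgl hovl
    refine ⟨⟨⟨psiTop N j l, psiBot N j l, s1, List.isChain_iff_pairwise.2 s2, s3⟩,
      ?_, ?_, ?_⟩, ?_⟩
    · show (psiTop N j l).length + (psiTop N j l).sum
        + ((psiBot N j l).map Prod.fst).sum = n
      rw [s4, s6, hwl]
    · exact s4
    · exact s5
    · exact Subtype.ext (phi_psi hj l hl hgl hovl)

end Paper
end

section
/- Let Ē_{k,i}(N) = Σ_{n,j} Ē_{k,i}(n,j,N) a^j q^n, where Ē_{k,i}(n,j,N) is the number of paths with major index n, N peaks, and j South steps satisfying the special (k,i)-conditions, and for 0 ≤ i < k let Γ̄_{k,i}(N) be the generating function for paths obtained by deleting the first North-East step of a path counted in Ē_{k,i+1}(N) that begins with a North-East step. Then: Ē_{k,i}(0) = 1 for 1 ≤ i ≤ k; Ē_{k,i}(N) = q^N Ē_{k,i+1}(N) + q^N Γ̄_{k,i−1}(N) for 1 ≤ i < k; Γ̄_{k,i}(N) = q^N Γ̄_{k,i−1}(N) + (a + q^{N−1}) Ē_{k,i+1}(N−1) for 0 < i < k and N ≥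 1; Ē_{k,k}(N) = (q^N/(1 − q^N)) Γ̄_{k,k−1}(N) for N ≥ 1; and Γ̄_{k,0}(N) = 0. -/
namespace Paper

/-- The four kinds of unitary steps. -/
inductive PStep : Type
  | NE | SE | S | E
  deriving DecidableEq, BEq, Repr

/-- Horizontal displacement of a step. -/
def stepDx : PStep → ℕ
  | .S => 0
  | _ => 1

/-- Vertical displacement of a step. -/
def stepDy : PStep → ℤ
  | .NE => 1
  | .SE => -1
  | .S => -1
  | .E => 0

/-- Height (`y`-coordinate) after performing the steps of `l`, starting at height `h`. -/
def pathHeight (h : ℕ) (l : List PStep) : ℤ := (h : ℤ) + (l.map stepDy).sum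

/-- `x`-coordinate after performing the steps of `l`, starting on the `y`-axis. -/
def pathX (l : List PStep) : ℕ := (l.map stepDx).sum

/-- A valid path: stays in the first quadrant, starts at `(0,h)` on the `y`-axis, ends
on the `x`-axis, South steps only appear directly after a North-East step, East steps
only appear at height `0`, and the path is empty or ends with a South-East or South step. -/
def ValidPath (h : ℕ) (l : List PStep) : Prop :=
  (∀ m : ℕ, 0 ≤ pathHeight h (l.take m)) ∧
  (∀ m : ℕ, l[m]? = some PStep.S → ∃ m', m = m' + 1 ∧ l[m']? = some PStep.NE) ∧
  (∀ m : ℕ, l[m]? = some PStep.E → pathHeight h (l.take m) = 0) ∧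
  pathHeight h l = 0 ∧
  (l = [] ∨ l.getLast? = some PStep.SE ∨ l.getLast? = some PStep.S)

/-- The vertex reached after step `m` is a peak: it is preceded by a North-East step and
followed by a South-East step (NESE peak) or a South step (NES peak). -/
def IsPeak (l : List PStep) (m : ℕ) : Prop :=
  l[m]? = some PStep.NE ∧ (l[m+1]? = some PStep.SE ∨ l[m+1]? = some PStep.S)

instance (l : List PStep) (m : ℕ) : Decidable (IsPeak l m) := by
  unfold IsPeak; infer_instance

/-- The major index of a path: the sum of the `x`-coordinates of its peaks. -/
def majorIndex (l : List PStep) : ℕ :=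
  ∑ m ∈ Finset.range l.length, if IsPeak l m then pathX (l.take (m + 1)) else 0

/-- The number of peaks of a path. -/
def numPeaks (l : List PStep) : ℕ :=
  ((Finset.range l.length).filter fun m => IsPeak l m).card

/-- The number of South steps of a path. -/
def southSteps (l : List PStep) : ℕ := l.count PStep.S

/-- A path satisfies the special `(k,i)`-conditions if it is a valid path starting at
height `k - i` whose height always stays below `k`. -/
def SpecialPath (k i : ℕ) (l : List PStep) : Prop :=
  ValidPath (k - i) l ∧ ∀ m : ℕ, pathHeight (k - i) (l.take m) < k

/-- `Ebar k i n j` is the number of paths with major index `n` and `j` South steps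
satisfying the special `(k,i)`-conditions. -/
noncomputable def Ebar (k i n j : ℕ) : ℕ :=
  Nat.card {l : List PStep // SpecialPath k i l ∧ majorIndex l = n ∧ southSteps l = j}


/-- `EgfP k i N` : the generating function (a formal power series in `q = X 0` and
`a = X 1`) for paths with `N` peaks satisfying the special `(k,i)`-conditions, where
the exponent of `q` records the major index and the exponent of `a` the number of
South steps. -/
noncomputable def EgfP (k i N : ℕ) : MvPowerSeries (Fin 2) ℚ :=
  fun d => (Nat.card {l : List PStep // SpecialPath k i l ∧ numPeaks l = N ∧
    majorIndex l = d 0 ∧ southSteps l = d 1} : ℚ)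

/-- `GgfP k i N` : the generating function for the paths obtained by deleting the
first North-East step of a path counted in `EgfP k (i+1) N` that begins with a
North-East step.  (Deleting the initial North-East step decreases the major index by
`N` and leaves the number of peaks and of South steps unchanged.) -/
noncomputable def GgfP (k i N : ℕ) : MvPowerSeries (Fin 2) ℚ :=
  fun d => (Nat.card {l : List PStep // SpecialPath k (i + 1) l ∧ numPeaks l = N ∧
    l.head? = some PStep.NE ∧ majorIndex l = d 0 + N ∧ southSteps l = d 1} : ℚ)


/-! ### Auxiliary lemmas -/

section Aux

/-- Height starting from an integer. -/
def phz (z : ℤ) (l : List PStep) : ℤ := z + (l.map stepDy).sum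

lemma pathHeight_eq_phz (h : ℕ) (l : List PStep) : pathHeight h l = phz h l := rfl

lemma phz_cons (z : ℤ) (s : PStep) (l : List PStep) :
    phz z (s :: l) = phz (z + stepDy s) l := by
  simp [phz]; ring

lemma phz_nil (z : ℤ) : phz z [] = z := by simp [phz]

lemma pathHeight_nil (h : ℕ) : pathHeight h [] = (h : ℤ) := by simp [pathHeight]

lemma pathHeight_cons_take (h h' : ℕ) (s : PStep) (l : List PStep)
    (hh : (h : ℤ) + stepDy s = (h' : ℤ)) (m : ℕ) :
    pathHeight h ((s :: l).take (m + 1)) = pathHeight h' (l.take m) := by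
  rw [List.take_succ_cons, pathHeight_eq_phz, pathHeight_eq_phz, phz_cons, hh]

lemma pathHeight_cons (h h' : ℕ) (s : PStep) (l : List PStep)
    (hh : (h : ℤ) + stepDy s = (h' : ℤ)) :
    pathHeight h (s :: l) = pathHeight h' l := by
  rw [pathHeight_eq_phz, pathHeight_eq_phz, phz_cons, hh]

lemma take_zero_height (h : ℕ) (l : List PStep) : pathHeight h (l.take 0) = (h : ℤ) := by
  simp [pathHeight]

/-- Master decomposition lemma for `ValidPath` along a first step. -/
lemma validPath_cons {s : PStep} {l : List PStep} {h h' : ℕ}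
    (hsS : s ≠ PStep.S) (hh : (h : ℤ) + stepDy s = (h' : ℤ))
    (hE : s = PStep.E → h = 0) (hNES : s = PStep.NE → l[0]? ≠ some PStep.S) :
    ValidPath h (s :: l) ↔ ValidPath h' l ∧ (l = [] → s = PStep.SE) := by
  constructor
  · rintro ⟨h1, h2, h3, h4, h5⟩
    have hlast : (s :: l).getLast? = some PStep.SE ∨ (s :: l).getLast? = some PStep.S := by
      rcases h5 with h5 | h5 | h5
      · exact absurd h5 (by simp)
      · exact Or.inl h5
      · exact Or.inr h5
    have hse : l = [] → s = PStep.SE := by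
      rintro rfl
      rcases hlast with h5 | h5 <;> simp_all
    refine ⟨⟨?_, ?_, ?_, ?_, ?_⟩, hse⟩
    · intro m
      have := h1 (m + 1)
      rwa [pathHeight_cons_take h h' s l hh] at this
    · intro m hm
      obtain ⟨m'', hm1, hm2⟩ := h2 (m + 1) (by simpa using hm)
      have hm'' : m'' = m := by omega
      rw [hm''] at hm2
      clear hm1 hm''
      cases m with
      | zero =>
        exfalso
        have hs : s = PStep.NE := by simpa using hm2
        exact (hNES hs) hm
      | succ m1 =>
        exact ⟨m1, rfl, by simpa using hm2⟩
    · intro m hm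
      have := h3 (m + 1) (by simpa using hm)
      rwa [pathHeight_cons_take h h' s l hh] at this
    · rwa [pathHeight_cons h h' s l hh] at h4
    · cases l with
      | nil => exact Or.inl rfl
      | cons a t =>
        right
        rcases hlast with h5 | h5
        · exact Or.inl (by simpa using h5)
        · exact Or.inr (by simpa using h5)
  · rintro ⟨⟨h1, h2, h3, h4, h5⟩, hse⟩
    refine ⟨?_, ?_, ?_, ?_, ?_⟩
    · intro m
      cases m with
      | zero =>
        simp only [List.take_zero, pathHeight_nil]
        exact Int.natCast_nonneg h
      | succ m => rw [pathHeight_cons_take h h' s l hh]; exact h1 m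
    · intro m hm
      cases m with
      | zero =>
        exfalso; apply hsS
        simpa using hm
      | succ m =>
        obtain ⟨m', rfl, hm2⟩ := h2 m (by simpa using hm)
        exact ⟨m' + 1, rfl, by simpa using hm2⟩
    · intro m hm
      cases m with
      | zero =>
        have : s = PStep.E := by simpa using hm
        rw [take_zero_height, hE this]; simp
      | succ m =>
        rw [pathHeight_cons_take h h' s l hh]
        exact h3 m (by simpa using hm)
    · rwa [pathHeight_cons h h' s l hh]
    · cases l with
      | nil =>
        right; left; rw [hse rfl]; simp
      | cons a t =>
        rcases h5 with h5 | h5 | h5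
        · exact absurd h5 (by simp)
        · right; left; rw [List.getLast?_cons_cons]; exact h5
        · right; right; rw [List.getLast?_cons_cons]; exact h5

end Aux

section Aux2

/-- Decomposition for a path beginning `NE, S`. -/
lemma validPath_NE_S (h : ℕ) (t : List PStep) :
    ValidPath h (PStep.NE :: PStep.S :: t) ↔ ValidPath h t := by
  have htk : ∀ m, pathHeight h ((PStep.NE :: PStep.S :: t).take (m + 2)) = pathHeight h (t.take m) := by
    intro m
    simp only [List.take_succ_cons, pathHeight_eq_phz, phz_cons]
    norm_num [stepDy]
  have htot : pathHeight h (PStep.NE :: PStep.S :: t) = pathHeight h t := by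
    simp only [pathHeight_eq_phz, phz_cons]
    norm_num [stepDy]
  constructor
  · rintro ⟨h1, h2, h3, h4, h5⟩
    refine ⟨?_, ?_, ?_, ?_, ?_⟩
    · intro m
      have := h1 (m + 2)
      rwa [htk] at this
    · intro m hm
      obtain ⟨m'', hm1, hm2⟩ := h2 (m + 2) (by simpa using hm)
      have hm'' : m'' = m + 1 := by omega
      rw [hm''] at hm2
      cases m with
      | zero => exfalso; simp at hm2
      | succ m1 => exact ⟨m1, rfl, by simpa using hm2⟩
    · intro m hm
      have := h3 (m + 2) (by simpa using hm)
      rwa [htk] at this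
    · rwa [htot] at h4
    · cases t with
      | nil => exact Or.inl rfl
      | cons a r =>
        rcases h5 with h5 | h5 | h5
        · exact absurd h5 (by simp)
        · right; left; rw [List.getLast?_cons_cons, List.getLast?_cons_cons] at h5; exact h5
        · right; right; rw [List.getLast?_cons_cons, List.getLast?_cons_cons] at h5; exact h5
  · rintro ⟨h1, h2, h3, h4, h5⟩
    have hnn : (0:ℤ) ≤ (h:ℤ) := Int.natCast_nonneg h
    refine ⟨?_, ?_, ?_, ?_, ?_⟩
    · intro m
      match m with
      | 0 => simpa [pathHeight_nil]
      | 1 =>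
        simp only [List.take_succ_cons, List.take_zero, pathHeight_eq_phz, phz_cons, phz_nil]
        simp [stepDy]; omega
      | (m+2) => rw [htk]; exact h1 m
    · intro m hm
      match m, hm with
      | 0, hm => simp at hm
      | 1, hm => exact ⟨0, rfl, by simp⟩
      | (m+2), hm =>
        obtain ⟨m', rfl, hm2⟩ := h2 m (by simpa using hm)
        exact ⟨m' + 2, rfl, by simpa using hm2⟩
    · intro m hm
      match m, hm with
      | 0, hm => simp at hm
      | 1, hm => simp at hm
      | (m+2), hm =>
        rw [htk]
        exact h3 m (by simpa using hm)
    · rwa [htot]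
    · cases t with
      | nil => right; right; simp
      | cons a r =>
        rcases h5 with h5 | h5 | h5
        · exact absurd h5 (by simp)
        · right; left; rw [List.getLast?_cons_cons, List.getLast?_cons_cons]; exact h5
        · right; right; rw [List.getLast?_cons_cons, List.getLast?_cons_cons]; exact h5

/-- Decomposition of the height bound along a first step. -/
lemma bound_cons {s : PStep} {l : List PStep} {h h' : ℕ} (k : ℕ)
    (hh : (h : ℤ) + stepDy s = (h' : ℤ)) :
    (∀ m, pathHeight h ((s :: l).take m) < (k:ℤ)) ↔
      ((h:ℤ) < (k:ℤ) ∧ ∀ m, pathHeight h' (l.take m) < (k:ℤ)) := by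
  constructor
  · intro hb
    refine ⟨by simpa [pathHeight_nil] using hb 0, fun m => ?_⟩
    have := hb (m + 1)
    rwa [pathHeight_cons_take h h' s l hh] at this
  · rintro ⟨h0, hb⟩ m
    cases m with
    | zero => simp only [List.take_zero, pathHeight_nil]; exact_mod_cast h0
    | succ m => rw [pathHeight_cons_take h h' s l hh]; exact hb m

lemma isPeak_cons_succ (s : PStep) (l : List PStep) (m : ℕ) :
    IsPeak (s :: l) (m + 1) ↔ IsPeak l m := by
  simp [IsPeak]

lemma isPeak_cons_zero (s : PStep) (l : List PStep) :
    IsPeak (s :: l) 0 ↔ s = PStep.NE ∧ (l[0]? = some PStep.SE ∨ l[0]? = some PStep.S) := by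
  simp [IsPeak]

lemma numPeaks_eq_sum (l : List PStep) :
    numPeaks l = ∑ m ∈ Finset.range l.length, if IsPeak l m then 1 else 0 := by
  rw [numPeaks, Finset.card_filter]

lemma pathX_cons (s : PStep) (l : List PStep) : pathX (s :: l) = stepDx s + pathX l := by
  simp [pathX]

lemma numPeaks_cons (s : PStep) (l : List PStep) :
    numPeaks (s :: l) = (if IsPeak (s :: l) 0 then 1 else 0) + numPeaks l := by
  rw [numPeaks_eq_sum, numPeaks_eq_sum, List.length_cons, Finset.sum_range_succ']
  rw [add_comm]
  congr 1

lemma majorIndex_cons (s : PStep) (l : List PStep) :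
    majorIndex (s :: l) = (if IsPeak (s :: l) 0 then 1 else 0)
      + stepDx s * numPeaks l + majorIndex l := by
  rw [majorIndex, List.length_cons, Finset.sum_range_succ']
  have h0 : (if IsPeak (s :: l) 0 then pathX ((s :: l).take (0 + 1)) else 0)
      = (if IsPeak (s :: l) 0 then 1 else 0) := by
    split
    · rename_i hp
      have hs : s = PStep.NE := ((isPeak_cons_zero s l).mp hp).1
      subst hs
      simp [pathX, stepDx]
    · rfl
  rw [h0]
  have h1 : ∀ m, (if IsPeak (s :: l) (m + 1) then pathX ((s :: l).take (m + 1 + 1)) else 0)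
      = (if IsPeak l m then stepDx s else 0) + (if IsPeak l m then pathX (l.take (m + 1)) else 0) := by
    intro m
    rw [List.take_succ_cons, pathX_cons]
    by_cases hp : IsPeak l m
    · simp [hp, isPeak_cons_succ]
    · simp [hp, isPeak_cons_succ]
  calc (∑ m ∈ Finset.range l.length,
          if IsPeak (s :: l) (m + 1) then pathX ((s :: l).take (m + 1 + 1)) else 0)
        + (if IsPeak (s :: l) 0 then 1 else 0)
      = (∑ m ∈ Finset.range l.length, ((if IsPeak l m then stepDx s else 0)
          + (if IsPeak l m then pathX (l.take (m + 1)) else 0)))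
        + (if IsPeak (s :: l) 0 then 1 else 0) := by
        congr 1
        exact Finset.sum_congr rfl fun m _ => h1 m
    _ = (if IsPeak (s :: l) 0 then 1 else 0) + stepDx s * numPeaks l + majorIndex l := by
        rw [Finset.sum_add_distrib]
        have : (∑ m ∈ Finset.range l.length, if IsPeak l m then stepDx s else 0)
            = stepDx s * numPeaks l := by
          rw [numPeaks_eq_sum, Finset.mul_sum]
          exact Finset.sum_congr rfl fun m _ => by split <;> simp
        rw [this, majorIndex]
        ring

lemma southSteps_cons (s : PStep) (l : List PStep) :
    southSteps (s :: l) = (if s = PStep.S then 1 else 0) + southSteps l := by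
  cases s <;> simp [southSteps, List.count_cons, add_comm] <;> rfl

lemma numPeaks_le_majorIndex (l : List PStep) : numPeaks l ≤ majorIndex l := by
  rw [numPeaks_eq_sum, majorIndex]
  apply Finset.sum_le_sum
  intro m hm
  by_cases hp : IsPeak l m
  · simp only [hp, if_true]
    have hm' : l[m]? = some PStep.NE := hp.1
    have hlt : m < l.length := by
      by_contra hc
      rw [List.getElem?_eq_none (by omega)] at hm'
      simp at hm'
    have : l.take (m + 1) = l.take m ++ [PStep.NE] := by
      rw [List.take_succ, hm']
      rfl
    rw [this]
    simp [pathX, stepDx]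
  · simp [hp]

lemma numPeaks_nil : numPeaks ([] : List PStep) = 0 := rfl
lemma majorIndex_nil : majorIndex ([] : List PStep) = 0 := rfl
lemma southSteps_nil : southSteps ([] : List PStep) = 0 := rfl

end Aux2

section Aux3

lemma validPath_SE_cons (h : ℕ) (t : List PStep) :
    ValidPath (h + 1) (PStep.SE :: t) ↔ ValidPath h t := by
  rw [validPath_cons (h' := h) (by decide) (by simp only [stepDy]; omega)
    (fun hc => absurd hc (by decide)) (fun hc => absurd hc (by decide))]
  constructor
  · exact fun hx => hx.1
  · exact fun hx => ⟨hx, fun _ => rfl⟩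

lemma validPath_E_cons (t : List PStep) :
    ValidPath 0 (PStep.E :: t) ↔ ValidPath 0 t ∧ t ≠ [] := by
  rw [validPath_cons (h' := 0) (by decide) (by simp only [stepDy]; omega) (fun _ => rfl)
    (fun hc => absurd hc (by decide))]
  constructor
  · rintro ⟨h1, h2⟩
    refine ⟨h1, fun hc => ?_⟩
    exact absurd (h2 hc) (by decide)
  · rintro ⟨h1, h2⟩
    exact ⟨h1, fun hc => absurd hc h2⟩

lemma validPath_NE_cons (h : ℕ) (t : List PStep) (ht : t[0]? ≠ some PStep.S) :
    ValidPath h (PStep.NE :: t) ↔ ValidPath (h + 1) t ∧ t ≠ [] := by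
  rw [validPath_cons (h' := h + 1) (by decide) (by simp only [stepDy]; omega)
    (fun hc => absurd hc (by decide)) (fun _ => ht)]
  constructor
  · rintro ⟨h1, h2⟩
    refine ⟨h1, fun hc => ?_⟩
    exact absurd (h2 hc) (by decide)
  · rintro ⟨h1, h2⟩
    exact ⟨h1, fun hc => absurd hc h2⟩

lemma valid_head_SE {h : ℕ} {t : List PStep} (hv : ValidPath h (PStep.SE :: t)) : 1 ≤ h := by
  have := hv.1 1
  simp only [List.take_succ_cons, List.take_zero, pathHeight_eq_phz, phz_cons, phz_nil] at this
  simp [stepDy] at this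
  omega

lemma valid_head_E0 {h : ℕ} {t : List PStep} (hv : ValidPath h (PStep.E :: t)) : h = 0 := by
  have := hv.2.2.1 0 (by simp)
  simp only [List.take_zero, pathHeight_nil] at this
  exact_mod_cast this

lemma valid_head_not_S {h : ℕ} {t : List PStep} (hv : ValidPath h (PStep.S :: t)) : False := by
  obtain ⟨m', hm, _⟩ := hv.2.1 0 (by simp)
  omega

lemma valid_NE_E {h : ℕ} {t : List PStep} (hv : ValidPath h (PStep.NE :: PStep.E :: t)) :
    False := by
  have := hv.2.2.1 1 (by simp)
  simp only [List.take_succ_cons, List.take_zero, pathHeight_eq_phz, phz_cons, phz_nil] at this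
  simp [stepDy] at this
  omega

lemma valid_nil_iff (h : ℕ) : ValidPath h [] ↔ h = 0 := by
  constructor
  · intro hv
    have := hv.2.2.2.1
    simp only [pathHeight_nil] at this
    exact_mod_cast this
  · rintro rfl
    refine ⟨fun m => by simp [pathHeight], fun m hm => by simp at hm,
      fun m hm => by simp at hm, by simp [pathHeight], Or.inl rfl⟩

lemma valid_NE_nil {h : ℕ} (hv : ValidPath h [PStep.NE]) : False := by
  rcases hv.2.2.2.2 with h5 | h5 | h5 <;> simp at h5

lemma valid_ne_nil {h : ℕ} {l : List PStep} (hv : ValidPath h l) (hh : h ≠ 0) : l ≠ [] := by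
  rintro rfl
  exact hh ((valid_nil_iff h).mp hv)

/-- A nonempty valid path starting at height 0 contains a North-East step. -/
lemma NE_mem_of_valid_zero : ∀ l : List PStep, ValidPath 0 l → l ≠ [] → PStep.NE ∈ l := by
  intro l
  induction l with
  | nil => intro _ hc; exact absurd rfl hc
  | cons s t ih =>
    intro hv _
    cases s with
    | NE => exact List.mem_cons_self
    | SE => exact absurd (valid_head_SE hv) (by omega)
    | S => exact absurd hv valid_head_not_S
    | E =>
      obtain ⟨hvt, htne⟩ := (validPath_E_cons t).mp hv
      exact List.mem_cons_of_mem _ (ih hvt htne)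

/-- A valid path containing a North-East step has at least one peak. -/
lemma one_le_numPeaks : ∀ (l : List PStep) (h : ℕ), ValidPath h l → PStep.NE ∈ l →
    1 ≤ numPeaks l := by
  intro l
  induction l with
  | nil => intro h _ hm; simp at hm
  | cons s t ih =>
    intro h hv hm
    cases s with
    | S => exact absurd hv valid_head_not_S
    | SE =>
      have h1 : 1 ≤ h := valid_head_SE hv
      obtain ⟨h2, rfl⟩ : ∃ h2, h = h2 + 1 := ⟨h - 1, by omega⟩
      have hvt := (validPath_SE_cons h2 t).mp hv
      have hmt : PStep.NE ∈ t := by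
        rcases List.mem_cons.mp hm with hc | hc
        · exact absurd hc (by decide)
        · exact hc
      have := ih h2 hvt hmt
      rw [numPeaks_cons]
      omega
    | E =>
      have h0 := valid_head_E0 hv
      subst h0
      obtain ⟨hvt, htne⟩ := (validPath_E_cons t).mp hv
      have := ih 0 hvt (NE_mem_of_valid_zero t hvt htne)
      rw [numPeaks_cons]
      omega
    | NE =>
      rcases ht : t[0]? with _ | u
      · have : t = [] := by
          cases t with
          | nil => rfl
          | cons a r => simp at ht
        subst this
        exact absurd hv valid_NE_nil
      · cases u with
        | NE =>
          have hvt := ((validPath_NE_cons h t (by rw [ht]; decide)).mp hv).1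
          have hmt : PStep.NE ∈ t := by
            cases t with
            | nil => simp at ht
            | cons a r =>
              simp only [List.getElem?_cons_zero, Option.some.injEq] at ht
              rw [ht]
              exact List.mem_cons_self
          have := ih (h + 1) hvt hmt
          rw [numPeaks_cons]
          omega
        | SE =>
          have hp : IsPeak (PStep.NE :: t) 0 := ⟨by simp, Or.inl (by simpa using ht)⟩
          rw [numPeaks_cons, if_pos hp]
          omega
        | S =>
          have hp : IsPeak (PStep.NE :: t) 0 := ⟨by simp, Or.inr (by simpa using ht)⟩
          rw [numPeaks_cons, if_pos hp]
          omega
        | E =>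
          obtain ⟨t', rfl⟩ : ∃ t', t = PStep.E :: t' := by
            cases t with
            | nil => simp at ht
            | cons a r =>
              simp only [List.getElem?_cons_zero, Option.some.injEq] at ht
              exact ⟨r, by rw [ht]⟩
          exact absurd hv valid_NE_E

/-- A valid path with no North-East step is a staircase of South-East steps. -/
lemma eq_replicate_of_no_NE : ∀ (l : List PStep) (h : ℕ), ValidPath h l → PStep.NE ∉ l →
    l = List.replicate h PStep.SE := by
  intro l
  induction l with
  | nil =>
    intro h hv _
    rw [(valid_nil_iff h).mp hv]
    rfl
  | cons s t ih =>
    intro h hv hm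
    cases s with
    | S => exact absurd hv valid_head_not_S
    | NE => exact absurd (List.mem_cons_self) hm
    | E =>
      have h0 := valid_head_E0 hv
      subst h0
      obtain ⟨hvt, htne⟩ := (validPath_E_cons t).mp hv
      exact absurd (List.mem_cons_of_mem _ (NE_mem_of_valid_zero t hvt htne)) hm
    | SE =>
      have h1 : 1 ≤ h := valid_head_SE hv
      obtain ⟨h2, rfl⟩ : ∃ h2, h = h2 + 1 := ⟨h - 1, by omega⟩
      have hvt := (validPath_SE_cons h2 t).mp hv
      have := ih h2 hvt (fun hc => hm (List.mem_cons_of_mem _ hc))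
      rw [this]
      rfl

end Aux3

section Aux4

/-- Length bound for valid paths. -/
lemma len_bound : ∀ (n : ℕ) (l : List PStep), l.length ≤ n → ∀ h : ℕ, ValidPath h l →
    l.length ≤ 2 * majorIndex l + h := by
  intro n
  induction n with
  | zero =>
    intro l hl h _
    omega
  | succ n ih =>
    intro l hl h hv
    cases l with
    | nil => simp
    | cons s t =>
      cases s with
      | S => exact absurd hv valid_head_not_S
      | SE =>
        have h1 : 1 ≤ h := valid_head_SE hv
        obtain ⟨h2, rfl⟩ : ∃ h2, h = h2 + 1 := ⟨h - 1, by omega⟩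
        have hvt := (validPath_SE_cons h2 t).mp hv
        have hlen := ih t (by simpa using hl) h2 hvt
        have hmaj : majorIndex (PStep.SE :: t) = numPeaks t + majorIndex t := by
          rw [majorIndex_cons, if_neg (fun hc => by exact absurd ((isPeak_cons_zero _ _).mp hc).1 (by decide))]
          simp [stepDx]
        simp only [List.length_cons, hmaj]
        omega
      | E =>
        have h0 := valid_head_E0 hv
        subst h0
        obtain ⟨hvt, htne⟩ := (validPath_E_cons t).mp hv
        have hP := one_le_numPeaks t 0 hvt (NE_mem_of_valid_zero t hvt htne)
        have hlen := ih t (by simpa using hl) 0 hvt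
        have hmaj : majorIndex (PStep.E :: t) = numPeaks t + majorIndex t := by
          rw [majorIndex_cons, if_neg (fun hc => by exact absurd ((isPeak_cons_zero _ _).mp hc).1 (by decide))]
          simp [stepDx]
        simp only [List.length_cons, hmaj]
        omega
      | NE =>
        rcases ht : t[0]? with _ | u
        · have : t = [] := by
            cases t with
            | nil => rfl
            | cons a r => simp at ht
          subst this
          exact absurd hv valid_NE_nil
        · cases u with
          | E =>
            obtain ⟨t', rfl⟩ : ∃ t', t = PStep.E :: t' := by
              cases t with
              | nil => simp at ht
              | cons a r =>
                simp only [List.getElem?_cons_zero, Option.some.injEq] at ht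
                exact ⟨r, by rw [ht]⟩
            exact absurd hv valid_NE_E
          | NE =>
            have hvt := ((validPath_NE_cons h t (by rw [ht]; decide)).mp hv).1
            have hmt : PStep.NE ∈ t := by
              cases t with
              | nil => simp at ht
              | cons a r =>
                simp only [List.getElem?_cons_zero, Option.some.injEq] at ht
                rw [ht]; exact List.mem_cons_self
            have hP := one_le_numPeaks t (h + 1) hvt hmt
            have hlen := ih t (by simpa using hl) (h + 1) hvt
            have hmaj : majorIndex (PStep.NE :: t) ≥ numPeaks t + majorIndex t := by
              rw [majorIndex_cons]
              simp [stepDx]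
            simp only [List.length_cons]
            omega
          | S =>
            obtain ⟨t', rfl⟩ : ∃ t', t = PStep.S :: t' := by
              cases t with
              | nil => simp at ht
              | cons a r =>
                simp only [List.getElem?_cons_zero, Option.some.injEq] at ht
                exact ⟨r, by rw [ht]⟩
            have hvt := (validPath_NE_S h t').mp hv
            have hlen := ih t' (by simp at hl ⊢; omega) h hvt
            have hmaj : majorIndex (PStep.NE :: PStep.S :: t') = 1 + numPeaks t' + majorIndex t' := by
              rw [majorIndex_cons, if_pos ⟨by simp, Or.inr (by simp)⟩]
              have h2 : majorIndex (PStep.S :: t') = majorIndex t' := by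
                rw [majorIndex_cons, if_neg (fun hc => by exact absurd ((isPeak_cons_zero _ _).mp hc).1 (by decide))]
                simp [stepDx]
              have h3 : numPeaks (PStep.S :: t') = numPeaks t' := by
                rw [numPeaks_cons, if_neg (fun hc => by exact absurd ((isPeak_cons_zero _ _).mp hc).1 (by decide))]
                omega
              rw [h2, h3]
              simp [stepDx]
            simp only [List.length_cons, hmaj]
            omega
          | SE =>
            obtain ⟨t', rfl⟩ : ∃ t', t = PStep.SE :: t' := by
              cases t with
              | nil => simp at ht
              | cons a r =>
                simp only [List.getElem?_cons_zero, Option.some.injEq] at ht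
                exact ⟨r, by rw [ht]⟩
            have hvt' := ((validPath_NE_cons h (PStep.SE :: t') (by simp)).mp hv).1
            have hvt : ValidPath h t' := (validPath_SE_cons h t').mp hvt'
            have hlen := ih t' (by simp at hl ⊢; omega) h hvt
            have hmaj : majorIndex (PStep.NE :: PStep.SE :: t') = 1 + 2 * numPeaks t' + majorIndex t' := by
              rw [majorIndex_cons, if_pos ⟨by simp, Or.inl (by simp)⟩]
              have h2 : majorIndex (PStep.SE :: t') = numPeaks t' + majorIndex t' := by
                rw [majorIndex_cons, if_neg (fun hc => by exact absurd ((isPeak_cons_zero _ _).mp hc).1 (by decide))]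
                simp [stepDx]
              have h3 : numPeaks (PStep.SE :: t') = numPeaks t' := by
                rw [numPeaks_cons, if_neg (fun hc => by exact absurd ((isPeak_cons_zero _ _).mp hc).1 (by decide))]
                omega
              rw [h2, h3]
              simp [stepDx]
              ring
            simp only [List.length_cons, hmaj]
            omega

instance : Fintype PStep :=
  ⟨⟨{PStep.NE, PStep.SE, PStep.S, PStep.E}, by decide⟩, fun x => by cases x <;> decide⟩

/-- Any set of paths cut out by a length bound is finite. -/
lemma finite_paths (C : List PStep → Prop) (M : ℕ) (hC : ∀ l, C l → l.length ≤ M) :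
    Finite {l : List PStep // C l} := by
  have : {l : List PStep | C l} ⊆ {l : List PStep | l.length ≤ M} := fun l hl => hC l hl
  exact ((List.finite_length_le PStep M).subset this).to_subtype

end Aux4

section Aux5

open Classical in
lemma card_split (C P : List PStep → Prop) [Finite {l : List PStep // C l}] :
    Nat.card {l : List PStep // C l}
      = Nat.card {l : List PStep // C l ∧ P l} + Nat.card {l : List PStep // C l ∧ ¬ P l} := by
  haveI : Finite {l : List PStep // C l ∧ P l} :=
    Finite.of_equiv _ (Equiv.subtypeSubtypeEquivSubtypeInter C P)
  haveI : Finite {l : List PStep // C l ∧ ¬ P l} :=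
    Finite.of_equiv _ (Equiv.subtypeSubtypeEquivSubtypeInter C (fun l => ¬ P l))
  rw [← Nat.card_sum]
  apply Nat.card_congr
  exact
    { toFun := fun x => if h : P x.1 then Sum.inl ⟨x.1, x.2, h⟩ else Sum.inr ⟨x.1, x.2, h⟩
      invFun := fun y => y.elim (fun a => ⟨a.1, a.2.1⟩) (fun a => ⟨a.1, a.2.1⟩)
      left_inv := fun x => by by_cases h : P x.1 <;> simp [h]
      right_inv := fun y => by
        rcases y with a | a
        · simp [a.2.2]
        · simp [a.2.2] }

lemma card_cons (s0 : PStep) (C C' : List PStep → Prop)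
    (hh : ∀ l, C l → l.head? = some s0) (hiff : ∀ t, C (s0 :: t) ↔ C' t) :
    Nat.card {l : List PStep // C l} = Nat.card {t : List PStep // C' t} := by
  have key : ∀ l, C l → C' l.tail := by
    intro l hC
    have hH := hh l hC
    cases l with
    | nil => simp at hH
    | cons a t =>
      simp only [List.head?_cons, Option.some.injEq] at hH
      subst hH
      exact (hiff t).mp hC
  apply Nat.card_congr
  exact
    { toFun := fun x => ⟨x.1.tail, key x.1 x.2⟩
      invFun := fun t => ⟨s0 :: t.1, (hiff t.1).mpr t.2⟩
      left_inv := by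
        rintro ⟨l, hC⟩
        have hH := hh l hC
        cases l with
        | nil => simp at hH
        | cons a t =>
          simp only [List.head?_cons, Option.some.injEq] at hH
          subst hH
          rfl
      right_inv := by rintro ⟨t, hC⟩; rfl }

lemma card_eq_iff (C C' : List PStep → Prop) (h : ∀ l, C l ↔ C' l) :
    Nat.card {l : List PStep // C l} = Nat.card {l : List PStep // C' l} :=
  Nat.card_congr (Equiv.subtypeEquivRight h)

lemma card_eq_zero (C : List PStep → Prop) (h : ∀ l, ¬ C l) :
    Nat.card {l : List PStep // C l} = 0 := by
  haveI : IsEmpty {l : List PStep // C l} := ⟨fun x => h x.1 x.2⟩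
  exact Nat.card_of_isEmpty

lemma card_eq_one (C : List PStep → Prop) (l0 : List PStep) (h0 : C l0)
    (huniq : ∀ l, C l → l = l0) : Nat.card {l : List PStep // C l} = 1 := by
  haveI : Unique {l : List PStep // C l} :=
    { default := ⟨l0, h0⟩
      uniq := fun x => Subtype.ext (huniq x.1 x.2) }
  exact Nat.card_unique

lemma head_cases {h : ℕ} {l : List PStep} (hv : ValidPath h l) (hne : l ≠ []) (hh : h ≠ 0) :
    l.head? = some PStep.SE ∨ l.head? = some PStep.NE := by
  cases l with
  | nil => exact absurd rfl hne
  | cons s t =>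
    cases s with
    | SE => exact Or.inl rfl
    | NE => exact Or.inr rfl
    | S => exact absurd hv valid_head_not_S
    | E => exact absurd (valid_head_E0 hv) hh

lemma head_cases0 {l : List PStep} (hv : ValidPath 0 l) (hne : l ≠ []) :
    l.head? = some PStep.E ∨ l.head? = some PStep.NE := by
  cases l with
  | nil => exact absurd rfl hne
  | cons s t =>
    cases s with
    | E => exact Or.inl rfl
    | NE => exact Or.inr rfl
    | S => exact absurd hv valid_head_not_S
    | SE => exact absurd (valid_head_SE hv) (by omega)

lemma second_cases {h : ℕ} {l : List PStep} (hv : ValidPath h (PStep.NE :: l)) :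
    l.head? = some PStep.NE ∨ l.head? = some PStep.SE ∨ l.head? = some PStep.S := by
  cases l with
  | nil => exact absurd hv valid_NE_nil
  | cons s t =>
    cases s with
    | NE => exact Or.inl rfl
    | SE => exact Or.inr (Or.inl rfl)
    | S => exact Or.inr (Or.inr rfl)
    | E => exact absurd hv valid_NE_E

lemma valid_replicate (n : ℕ) : ValidPath n (List.replicate n PStep.SE) := by
  induction n with
  | zero => exact (valid_nil_iff 0).mpr rfl
  | succ n ih =>
    rw [List.replicate_succ]
    exact (validPath_SE_cons n _).mpr ih

lemma pathHeight_replicate (h n m : ℕ) :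
    pathHeight h ((List.replicate n PStep.SE).take m) = (h : ℤ) - min m n := by
  rw [List.take_replicate]
  simp only [pathHeight, List.map_replicate, List.sum_replicate, smul_eq_mul]
  simp [stepDy]
  ring

lemma not_isPeak_replicate (n m : ℕ) : ¬ IsPeak (List.replicate n PStep.SE) m := by
  rintro ⟨h1, _⟩
  rw [List.getElem?_replicate] at h1
  split at h1 <;> simp_all

lemma numPeaks_replicate (n : ℕ) : numPeaks (List.replicate n PStep.SE) = 0 := by
  rw [numPeaks_eq_sum]
  exact Finset.sum_eq_zero fun m _ => by simp [not_isPeak_replicate]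

lemma majorIndex_replicate (n : ℕ) : majorIndex (List.replicate n PStep.SE) = 0 := by
  rw [majorIndex]
  exact Finset.sum_eq_zero fun m _ => by simp [not_isPeak_replicate]

instance : LawfulBEq PStep where
  eq_of_beq := fun {a b} h => by cases a <;> cases b <;> first | rfl | exact absurd h (by decide)
  rfl := fun {a} => by cases a <;> rfl

lemma southSteps_replicate (n : ℕ) : southSteps (List.replicate n PStep.SE) = 0 := by
  rw [southSteps, List.count_replicate]
  simp

lemma numPeaks_pos_ne_nil {l : List PStep} {N : ℕ} (hN : 1 ≤ N) (h : numPeaks l = N) :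
    l ≠ [] := by
  rintro rfl
  rw [numPeaks_nil] at h
  omega

open MvPowerSeries in
lemma coeff_X0_pow_mul (N : ℕ) (F : MvPowerSeries (Fin 2) ℚ) (d : Fin 2 →₀ ℕ) :
    MvPowerSeries.coeff d ((X 0 : MvPowerSeries (Fin 2) ℚ) ^ N * F)
      = if N ≤ d 0 then MvPowerSeries.coeff (d - Finsupp.single 0 N) F else 0 := by
  rw [MvPowerSeries.X_pow_eq, MvPowerSeries.coeff_monomial_mul]
  simp [Finsupp.single_le_iff]

open MvPowerSeries in
lemma coeff_X1_mul (F : MvPowerSeries (Fin 2) ℚ) (d : Fin 2 →₀ ℕ) :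
    MvPowerSeries.coeff d ((X 1 : MvPowerSeries (Fin 2) ℚ) * F)
      = if 1 ≤ d 1 then MvPowerSeries.coeff (d - Finsupp.single 1 1) F else 0 := by
  rw [show (X 1 : MvPowerSeries (Fin 2) ℚ) = (X 1 : MvPowerSeries (Fin 2) ℚ) ^ 1 by rw [pow_one],
    MvPowerSeries.X_pow_eq, MvPowerSeries.coeff_monomial_mul]
  simp [Finsupp.single_le_iff]

lemma sub_single0_apply0 (d : Fin 2 →₀ ℕ) (N : ℕ) :
    (d - Finsupp.single (0 : Fin 2) N) 0 = d 0 - N := by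
  simp [Finsupp.sub_apply]

lemma sub_single0_apply1 (d : Fin 2 →₀ ℕ) (N : ℕ) :
    (d - Finsupp.single (0 : Fin 2) N) 1 = d 1 := by
  simp [Finsupp.sub_apply, Finsupp.single_apply]

lemma sub_single1_apply0 (d : Fin 2 →₀ ℕ) (N : ℕ) :
    (d - Finsupp.single (1 : Fin 2) N) 0 = d 0 := by
  simp [Finsupp.sub_apply, Finsupp.single_apply]

lemma sub_single1_apply1 (d : Fin 2 →₀ ℕ) (N : ℕ) :
    (d - Finsupp.single (1 : Fin 2) N) 1 = d 1 - N := by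
  simp [Finsupp.sub_apply]

lemma finsupp_fin2_eq_zero_iff (d : Fin 2 →₀ ℕ) : d = 0 ↔ d 0 = 0 ∧ d 1 = 0 := by
  constructor
  · rintro rfl; simp
  · rintro ⟨h0, h1⟩
    ext i
    fin_cases i
    · simpa using h0
    · simpa using h1

lemma coeff_EgfP (k i N : ℕ) (d : Fin 2 →₀ ℕ) :
    MvPowerSeries.coeff d (EgfP k i N)
      = (Nat.card {l : List PStep // SpecialPath k i l ∧ numPeaks l = N ∧
          majorIndex l = d 0 ∧ southSteps l = d 1} : ℚ) := rfl

lemma coeff_GgfP (k i N : ℕ) (d : Fin 2 →₀ ℕ) :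
    MvPowerSeries.coeff d (GgfP k i N)
      = (Nat.card {l : List PStep // SpecialPath k (i + 1) l ∧ numPeaks l = N ∧
          l.head? = some PStep.NE ∧ majorIndex l = d 0 + N ∧ southSteps l = d 1} : ℚ) := rfl

end Aux5
section Aux6

lemma not_isPeak_zero {s : PStep} (hs : s ≠ PStep.NE) (l : List PStep) : ¬ IsPeak (s :: l) 0 :=
  fun hc => hs ((isPeak_cons_zero s l).mp hc).1

lemma numPeaks_cons_ne {s : PStep} (hs : s ≠ PStep.NE) (l : List PStep) :
    numPeaks (s :: l) = numPeaks l := by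
  rw [numPeaks_cons, if_neg (not_isPeak_zero hs l)]
  omega

lemma majorIndex_cons_ne {s : PStep} (hs : s ≠ PStep.NE) (l : List PStep) :
    majorIndex (s :: l) = stepDx s * numPeaks l + majorIndex l := by
  rw [majorIndex_cons, if_neg (not_isPeak_zero hs l)]
  omega

lemma numPeaks_NE_peak (l : List PStep)
    (hp : l[0]? = some PStep.SE ∨ l[0]? = some PStep.S) :
    numPeaks (PStep.NE :: l) = 1 + numPeaks l := by
  rw [numPeaks_cons, if_pos ⟨by simp, by simpa using hp⟩]

lemma majorIndex_NE_peak (l : List PStep)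
    (hp : l[0]? = some PStep.SE ∨ l[0]? = some PStep.S) :
    majorIndex (PStep.NE :: l) = 1 + numPeaks l + majorIndex l := by
  rw [majorIndex_cons, if_pos ⟨by simp, by simpa using hp⟩]
  simp [stepDx]

lemma numPeaks_NE_NE (l : List PStep) (hp : l[0]? = some PStep.NE) :
    numPeaks (PStep.NE :: l) = numPeaks l := by
  rw [numPeaks_cons, if_neg]
  · omega
  · rintro ⟨_, hc | hc⟩ <;> simp only [List.getElem?_cons_succ] at hc <;>
      rw [hp] at hc <;> simp at hc

lemma majorIndex_NE_NE (l : List PStep) (hp : l[0]? = some PStep.NE) :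
    majorIndex (PStep.NE :: l) = numPeaks l + majorIndex l := by
  rw [majorIndex_cons, if_neg]
  · simp [stepDx]
  · rintro ⟨_, hc | hc⟩ <;> simp only [List.getElem?_cons_succ] at hc <;>
      rw [hp] at hc <;> simp at hc

lemma southSteps_cons_ne {s : PStep} (hs : s ≠ PStep.S) (l : List PStep) :
    southSteps (s :: l) = southSteps l := by
  rw [southSteps_cons, if_neg hs]
  omega

lemma southSteps_S_cons (l : List PStep) :
    southSteps (PStep.S :: l) = 1 + southSteps l := by
  rw [southSteps_cons, if_pos rfl]

lemma head?_eq_zero (l : List PStep) : l.head? = l[0]? := by cases l <;> simp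

lemma mem_of_getElem?' {l : List PStep} {n : ℕ} {a : PStep} (h : l[n]? = some a) : a ∈ l := by
  have hn : n < l.length := by
    by_contra hc
    rw [List.getElem?_eq_none (by omega)] at h
    simp at h
  have h2 : l[n] = a := by
    rw [List.getElem?_eq_getElem hn] at h
    exact Option.some.inj h
  exact h2 ▸ List.getElem_mem hn

lemma special_SE {k i : ℕ} (hi : 1 ≤ i) (hik : i < k) (t : List PStep) :
    SpecialPath k i (PStep.SE :: t) ↔ SpecialPath k (i + 1) t := by
  have hki : k - i = (k - (i + 1)) + 1 := by omega
  have hhs : ((k - (i + 1) + 1 : ℕ) : ℤ) + stepDy PStep.SE = ((k - (i + 1) : ℕ) : ℤ) := by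
    simp only [stepDy]; omega
  have hlt : ((k - (i + 1) + 1 : ℕ) : ℤ) < (k : ℤ) := by
    have : k - (i + 1) + 1 < k := by omega
    exact_mod_cast this
  rw [SpecialPath, SpecialPath, hki, validPath_SE_cons, bound_cons k hhs]
  constructor
  · rintro ⟨hv, _, hb⟩; exact ⟨hv, hb⟩
  · rintro ⟨hv, hb⟩; exact ⟨hv, hlt, hb⟩

lemma special_NE {k j : ℕ} (hj : 1 ≤ j) (hjk : j ≤ k) (t : List PStep)
    (ht : t[0]? ≠ some PStep.S) :
    SpecialPath k j (PStep.NE :: t) ↔ SpecialPath k (j - 1) t ∧ t ≠ [] := by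
  have e : k - (j - 1) = k - j + 1 := by omega
  have hh : ((k - j : ℕ) : ℤ) + stepDy PStep.NE = ((k - j + 1 : ℕ) : ℤ) := by
    simp only [stepDy]; omega
  have hlt : ((k - j : ℕ) : ℤ) < (k : ℤ) := by
    have : k - j < k := by omega
    exact_mod_cast this
  rw [SpecialPath, SpecialPath, e, validPath_NE_cons (k - j) t ht, bound_cons k hh]
  constructor
  · rintro ⟨⟨hv, hne⟩, _, hb⟩; exact ⟨⟨hv, hb⟩, hne⟩
  · rintro ⟨⟨hv, hb⟩, hne⟩; exact ⟨⟨hv, hne⟩, hlt, hb⟩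

lemma special_NE_S {k j : ℕ} (hj : 2 ≤ j) (hjk : j ≤ k) (t : List PStep) :
    SpecialPath k j (PStep.NE :: PStep.S :: t) ↔ SpecialPath k j t := by
  have hh1 : ((k - j : ℕ) : ℤ) + stepDy PStep.NE = ((k - j + 1 : ℕ) : ℤ) := by
    simp only [stepDy]; omega
  have hh2 : ((k - j + 1 : ℕ) : ℤ) + stepDy PStep.S = ((k - j : ℕ) : ℤ) := by
    simp only [stepDy]; omega
  have hlt1 : ((k - j : ℕ) : ℤ) < (k : ℤ) := by
    have : k - j < k := by omega
    exact_mod_cast this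
  have hlt2 : ((k - j + 1 : ℕ) : ℤ) < (k : ℤ) := by
    have : k - j + 1 < k := by omega
    exact_mod_cast this
  rw [SpecialPath, SpecialPath, validPath_NE_S, bound_cons k hh1, bound_cons k hh2]
  constructor
  · rintro ⟨hv, _, _, hb⟩; exact ⟨hv, hb⟩
  · rintro ⟨hv, hb⟩; exact ⟨hv, hlt1, hlt2, hb⟩

lemma special_NE_SE {k j : ℕ} (hj : 2 ≤ j) (hjk : j ≤ k) (t : List PStep) :
    SpecialPath k j (PStep.NE :: PStep.SE :: t) ↔ SpecialPath k j t := by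
  have hh1 : ((k - j : ℕ) : ℤ) + stepDy PStep.NE = ((k - j + 1 : ℕ) : ℤ) := by
    simp only [stepDy]; omega
  have hh2 : ((k - j + 1 : ℕ) : ℤ) + stepDy PStep.SE = ((k - j : ℕ) : ℤ) := by
    simp only [stepDy]; omega
  have hlt1 : ((k - j : ℕ) : ℤ) < (k : ℤ) := by
    have : k - j < k := by omega
    exact_mod_cast this
  have hlt2 : ((k - j + 1 : ℕ) : ℤ) < (k : ℤ) := by
    have : k - j + 1 < k := by omega
    exact_mod_cast this
  have hval : ValidPath (k - j) (PStep.NE :: PStep.SE :: t) ↔ ValidPath (k - j) t := by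
    rw [validPath_NE_cons (k - j) _ (by simp), validPath_SE_cons (k - j) t]
    constructor
    · rintro ⟨hv, _⟩; exact hv
    · intro hv; exact ⟨hv, by simp⟩
  rw [SpecialPath, SpecialPath, hval, bound_cons k hh1, bound_cons k hh2]
  constructor
  · rintro ⟨hv, _, _, hb⟩; exact ⟨hv, hb⟩
  · rintro ⟨hv, hb⟩; exact ⟨hv, hlt1, hlt2, hb⟩

lemma special_E {k : ℕ} (hk : 1 ≤ k) (t : List PStep) :
    SpecialPath k k (PStep.E :: t) ↔ SpecialPath k k t ∧ t ≠ [] := by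
  have e : k - k = 0 := by omega
  have hh : ((0 : ℕ) : ℤ) + stepDy PStep.E = ((0 : ℕ) : ℤ) := by simp [stepDy]
  have hlt : ((0 : ℕ) : ℤ) < (k : ℤ) := by exact_mod_cast hk
  rw [SpecialPath, SpecialPath, e, validPath_E_cons, bound_cons k hh]
  constructor
  · rintro ⟨⟨hv, hne⟩, _, hb⟩; exact ⟨⟨hv, hb⟩, hne⟩
  · rintro ⟨⟨hv, hb⟩, hne⟩; exact ⟨⟨hv, hne⟩, hlt, hb⟩

lemma finite_gen (k i : ℕ) (P : List PStep → Prop) (n : ℕ)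
    (hP : ∀ l, P l → SpecialPath k i l ∧ majorIndex l = n) :
    Finite {l : List PStep // P l} := by
  apply finite_paths P (2 * n + k)
  intro l hl
  obtain ⟨⟨hv, _⟩, hmaj⟩ := hP l hl
  have h1 := len_bound l.length l le_rfl (k - i) hv
  have h2 : k - i ≤ k := Nat.sub_le _ _
  omega

end Aux6

section Statements

open MvPowerSeries

lemma stmt5 (k : ℕ) (hk : 1 ≤ k) (N : ℕ) : GgfP k 0 N = 0 := by
  apply MvPowerSeries.ext
  intro d
  have hz : (MvPowerSeries.coeff d) (0 : MvPowerSeries (Fin 2) ℚ) = 0 := map_zero _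
  rw [coeff_GgfP, hz]
  rw [show ((0 : ℚ) = ((0 : ℕ) : ℚ)) from by norm_num]
  rw [Nat.cast_inj]
  apply card_eq_zero
  rintro l ⟨⟨hv, hb⟩, hP, hhead, hmaj, hs⟩
  obtain ⟨t, rfl⟩ : ∃ t, l = PStep.NE :: t := by
    cases l with
    | nil => simp at hhead
    | cons a t =>
      simp only [List.head?_cons, Option.some.injEq] at hhead
      exact ⟨t, by rw [hhead]⟩
  have hb1 := hb 1
  have : pathHeight (k - (0 + 1)) ((PStep.NE :: t).take 1) = ((k - 1 : ℕ) : ℤ) + 1 := by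
    simp [pathHeight, stepDy]
  rw [this] at hb1
  omega

lemma stmt1 (k i : ℕ) (h1 : 1 ≤ i) (h2 : i ≤ k) : EgfP k i 0 = 1 := by
  apply MvPowerSeries.ext
  intro d
  rw [coeff_EgfP, MvPowerSeries.coeff_one]
  by_cases hd : d = 0
  · rw [if_pos hd]
    subst hd
    simp only [Finsupp.coe_zero, Pi.zero_apply]
    rw [show ((1 : ℚ) = ((1 : ℕ) : ℚ)) from by norm_num, Nat.cast_inj]
    apply card_eq_one _ (List.replicate (k - i) PStep.SE)
    · refine ⟨⟨valid_replicate (k - i), fun m => ?_⟩, numPeaks_replicate _,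
        majorIndex_replicate _, southSteps_replicate _⟩
      rw [pathHeight_replicate]
      have hik : k - i < k := by omega
      have : ((k - i : ℕ) : ℤ) < (k : ℤ) := by exact_mod_cast hik
      omega
    · rintro l ⟨⟨hv, _⟩, hP, _, _⟩
      have hnoNE : PStep.NE ∉ l := by
        intro hmem
        have := one_le_numPeaks l (k - i) hv hmem
        omega
      exact eq_replicate_of_no_NE l (k - i) hv hnoNE
  · rw [if_neg hd]
    rw [show ((0 : ℚ) = ((0 : ℕ) : ℚ)) from by norm_num, Nat.cast_inj]
    apply card_eq_zero
    rintro l ⟨⟨hv, _⟩, hP, hmaj, hs⟩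
    have hnoNE : PStep.NE ∉ l := by
      intro hmem
      have := one_le_numPeaks l (k - i) hv hmem
      omega
    have hrep := eq_replicate_of_no_NE l (k - i) hv hnoNE
    subst hrep
    rw [majorIndex_replicate] at hmaj
    rw [southSteps_replicate] at hs
    exact hd ((finsupp_fin2_eq_zero_iff d).mpr ⟨hmaj.symm, hs.symm⟩)

end Statements
lemma head_destruct {l : List PStep} {s : PStep} (h : l.head? = some s) :
    ∃ t, l = s :: t := by
  cases l with
  | nil => simp at h
  | cons a t =>
    simp only [List.head?_cons, Option.some.injEq] at h
    exact ⟨t, by rw [h]⟩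

lemma get0_destruct {l : List PStep} {s : PStep} (h : l[0]? = some s) :
    ∃ t, l = s :: t := by
  cases l with
  | nil => simp at h
  | cons a t =>
    simp only [List.getElem?_cons_zero, Option.some.injEq] at h
    exact ⟨t, by rw [h]⟩

section Stmt2

open MvPowerSeries

lemma stmt2 (k : ℕ) (hk : 1 ≤ k) (i N : ℕ) (hi : 1 ≤ i) (hik : i < k) :
    EgfP k i N = (X 0 : MvPowerSeries (Fin 2) ℚ) ^ N * EgfP k (i + 1) N +
      (X 0 : MvPowerSeries (Fin 2) ℚ) ^ N * GgfP k (i - 1) N := by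
  apply MvPowerSeries.ext
  intro d
  rw [map_add, coeff_X0_pow_mul, coeff_X0_pow_mul, coeff_EgfP, coeff_EgfP, coeff_GgfP,
    sub_single0_apply0, sub_single0_apply1]
  by_cases hdN : N ≤ d 0
  · rw [if_pos hdN, if_pos hdN, ← Nat.cast_add, Nat.cast_inj]
    set C : List PStep → Prop := fun l =>
      SpecialPath k i l ∧ numPeaks l = N ∧ majorIndex l = d 0 ∧ southSteps l = d 1 with hC
    haveI : Finite {l : List PStep // C l} :=
      finite_gen k i C (d 0) (fun l hl => ⟨hl.1, hl.2.2.1⟩)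
    rw [card_split C (fun l => l.head? = some PStep.SE)]
    congr 1
    · apply card_cons PStep.SE _ _ (fun l hl => hl.2)
      intro t
      have hP : numPeaks (PStep.SE :: t) = numPeaks t := numPeaks_cons_ne (by decide) t
      have hM : majorIndex (PStep.SE :: t) = numPeaks t + majorIndex t := by
        rw [majorIndex_cons_ne (by decide) t]; simp [stepDx]
      have hS : southSteps (PStep.SE :: t) = southSteps t := southSteps_cons_ne (by decide) t
      simp only [hC]
      rw [special_SE hi hik t]
      constructor
      · rintro ⟨⟨hsp, hPt, hMt, hSt⟩, _⟩
        rw [hP] at hPt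
        rw [hM, hPt] at hMt
        rw [hS] at hSt
        exact ⟨hsp, hPt, by omega, hSt⟩
      · rintro ⟨hsp, hPt, hMt, hSt⟩
        exact ⟨⟨hsp, by rw [hP]; exact hPt, by rw [hM, hPt]; omega, by rw [hS]; exact hSt⟩, rfl⟩
    · apply card_eq_iff
      intro l
      have hii : i - 1 + 1 = i := by omega
      rw [hii]
      simp only [hC]
      constructor
      · rintro ⟨⟨hsp, hPt, hMt, hSt⟩, hne⟩
        have hnil : l ≠ [] := valid_ne_nil hsp.1 (by omega)
        rcases head_cases hsp.1 hnil (by omega) with hh | hh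
        · exact absurd hh hne
        · exact ⟨hsp, hPt, hh, by omega, hSt⟩
      · rintro ⟨hsp, hPt, hh, hMt, hSt⟩
        refine ⟨⟨hsp, hPt, by omega, hSt⟩, ?_⟩
        rw [hh]; simp
  · rw [if_neg hdN, if_neg hdN, add_zero]
    rw [show ((0 : ℚ) = ((0 : ℕ) : ℚ)) from by norm_num, Nat.cast_inj]
    apply card_eq_zero
    rintro l ⟨_, hP, hM, _⟩
    have := numPeaks_le_majorIndex l
    omega

end Stmt2

section Stmt4

open MvPowerSeries

lemma eq4 (k : ℕ) (hk : 1 ≤ k) (N : ℕ) (hN : 1 ≤ N) :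
    EgfP k k N = (X 0 : MvPowerSeries (Fin 2) ℚ) ^ N * EgfP k k N +
      (X 0 : MvPowerSeries (Fin 2) ℚ) ^ N * GgfP k (k - 1) N := by
  apply MvPowerSeries.ext
  intro d
  rw [map_add, coeff_X0_pow_mul, coeff_X0_pow_mul, coeff_EgfP, coeff_EgfP, coeff_GgfP,
    sub_single0_apply0, sub_single0_apply1]
  by_cases hdN : N ≤ d 0
  · rw [if_pos hdN, if_pos hdN, ← Nat.cast_add, Nat.cast_inj]
    set C : List PStep → Prop := fun l =>
      SpecialPath k k l ∧ numPeaks l = N ∧ majorIndex l = d 0 ∧ southSteps l = d 1 with hC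
    haveI : Finite {l : List PStep // C l} :=
      finite_gen k k C (d 0) (fun l hl => ⟨hl.1, hl.2.2.1⟩)
    rw [card_split C (fun l => l.head? = some PStep.E)]
    congr 1
    · apply card_cons PStep.E _ _ (fun l hl => hl.2)
      intro t
      have hP : numPeaks (PStep.E :: t) = numPeaks t := numPeaks_cons_ne (by decide) t
      have hM : majorIndex (PStep.E :: t) = numPeaks t + majorIndex t := by
        rw [majorIndex_cons_ne (by decide) t]; simp [stepDx]
      have hS : southSteps (PStep.E :: t) = southSteps t := southSteps_cons_ne (by decide) t
      simp only [hC]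
      rw [special_E hk t]
      constructor
      · rintro ⟨⟨⟨hsp, _⟩, hPt, hMt, hSt⟩, _⟩
        rw [hP] at hPt
        rw [hM, hPt] at hMt
        rw [hS] at hSt
        exact ⟨hsp, hPt, by omega, hSt⟩
      · rintro ⟨hsp, hPt, hMt, hSt⟩
        refine ⟨⟨⟨hsp, numPeaks_pos_ne_nil hN hPt⟩, by rw [hP]; exact hPt,
          by rw [hM, hPt]; omega, by rw [hS]; exact hSt⟩, rfl⟩
    · apply card_eq_iff
      intro l
      have hkk : k - 1 + 1 = k := by omega
      rw [hkk]
      simp only [hC]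
      constructor
      · rintro ⟨⟨hsp, hPt, hMt, hSt⟩, hne⟩
        have hnil : l ≠ [] := numPeaks_pos_ne_nil hN hPt
        have hv : ValidPath 0 l := by
          have := hsp.1
          rwa [Nat.sub_self] at this
        rcases head_cases0 hv hnil with hh | hh
        · exact absurd hh hne
        · exact ⟨hsp, hPt, hh, by omega, hSt⟩
      · rintro ⟨hsp, hPt, hh, hMt, hSt⟩
        refine ⟨⟨hsp, hPt, by omega, hSt⟩, ?_⟩
        rw [hh]; simp
  · rw [if_neg hdN, if_neg hdN, add_zero]
    rw [show ((0 : ℚ) = ((0 : ℕ) : ℚ)) from by norm_num, Nat.cast_inj]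
    apply card_eq_zero
    rintro l ⟨_, hP, hM, _⟩
    have := numPeaks_le_majorIndex l
    omega

lemma stmt4 (k : ℕ) (hk : 1 ≤ k) (N : ℕ) (hN : 1 ≤ N) :
    EgfP k k N = (X 0 : MvPowerSeries (Fin 2) ℚ) ^ N *
      (1 - (X 0 : MvPowerSeries (Fin 2) ℚ) ^ N)⁻¹ * GgfP k (k - 1) N := by
  have hc : constantCoeff (1 - (X 0 : MvPowerSeries (Fin 2) ℚ) ^ N) = 1 := by
    rw [map_sub, map_pow, constantCoeff_one, constantCoeff_X,
      zero_pow (by omega : N ≠ 0), sub_zero]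
  have hne : constantCoeff (1 - (X 0 : MvPowerSeries (Fin 2) ℚ) ^ N) ≠ 0 := by
    rw [hc]; exact one_ne_zero
  have h1 : (1 - (X 0 : MvPowerSeries (Fin 2) ℚ) ^ N) * EgfP k k N
      = (X 0 : MvPowerSeries (Fin 2) ℚ) ^ N * GgfP k (k - 1) N := by
    linear_combination eq4 k hk N hN
  calc EgfP k k N
      = ((1 - (X 0 : MvPowerSeries (Fin 2) ℚ) ^ N)⁻¹
          * (1 - (X 0 : MvPowerSeries (Fin 2) ℚ) ^ N)) * EgfP k k N := by
        rw [MvPowerSeries.inv_mul_cancel _ hne, one_mul]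
    _ = (1 - (X 0 : MvPowerSeries (Fin 2) ℚ) ^ N)⁻¹
          * ((1 - (X 0 : MvPowerSeries (Fin 2) ℚ) ^ N) * EgfP k k N) := by ring
    _ = (1 - (X 0 : MvPowerSeries (Fin 2) ℚ) ^ N)⁻¹
          * ((X 0 : MvPowerSeries (Fin 2) ℚ) ^ N * GgfP k (k - 1) N) := by rw [h1]
    _ = (X 0 : MvPowerSeries (Fin 2) ℚ) ^ N *
          (1 - (X 0 : MvPowerSeries (Fin 2) ℚ) ^ N)⁻¹ * GgfP k (k - 1) N := by ring

end Stmt4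
section Stmt3

open MvPowerSeries

lemma get1_cons (s : PStep) (t : List PStep) : (s :: t)[1]? = t[0]? := by simp

lemma stmt3 (k : ℕ) (hk : 1 ≤ k) (i N : ℕ) (hi : 0 < i) (hik : i < k) (hN : 1 ≤ N) :
    GgfP k i N = (X 0 : MvPowerSeries (Fin 2) ℚ) ^ N * GgfP k (i - 1) N +
      ((X 1 : MvPowerSeries (Fin 2) ℚ) + (X 0 : MvPowerSeries (Fin 2) ℚ) ^ (N - 1)) *
        EgfP k (i + 1) (N - 1) := by
  apply MvPowerSeries.ext
  intro d
  rw [map_add, coeff_X0_pow_mul, add_mul, map_add, coeff_X1_mul, coeff_X0_pow_mul,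
    coeff_GgfP, coeff_GgfP, coeff_EgfP, coeff_EgfP]
  simp only [sub_single0_apply0, sub_single0_apply1, sub_single1_apply0, sub_single1_apply1]
  set C : List PStep → Prop := fun l => SpecialPath k (i + 1) l ∧ numPeaks l = N ∧
    l.head? = some PStep.NE ∧ majorIndex l = d 0 + N ∧ southSteps l = d 1 with hC
  haveI : Finite {l : List PStep // C l} :=
    finite_gen k (i + 1) C (d 0 + N) (fun l hl => ⟨hl.1, hl.2.2.2.1⟩)
  haveI : Finite {l : List PStep // C l ∧ ¬ l[1]? = some PStep.NE} :=
    finite_gen k (i + 1) _ (d 0 + N) (fun l hl => ⟨hl.1.1, hl.1.2.2.2.1⟩)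
  have hsplit : Nat.card {l : List PStep // C l}
      = Nat.card {l : List PStep // C l ∧ l[1]? = some PStep.NE}
        + (Nat.card {l : List PStep //
            (C l ∧ ¬ l[1]? = some PStep.NE) ∧ l[1]? = some PStep.S}
          + Nat.card {l : List PStep //
            (C l ∧ ¬ l[1]? = some PStep.NE) ∧ ¬ l[1]? = some PStep.S}) := by
    rw [card_split C (fun l => l[1]? = some PStep.NE)]
    congr 1
    exact card_split _ (fun l => l[1]? = some PStep.S)
  have e1 : ((Nat.card {l : List PStep // C l ∧ l[1]? = some PStep.NE} : ℕ) : ℚ)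
      = if N ≤ d 0 then
          ((Nat.card {l : List PStep // SpecialPath k (i - 1 + 1) l ∧ numPeaks l = N ∧
            l.head? = some PStep.NE ∧ majorIndex l = d 0 - N + N ∧ southSteps l = d 1} : ℕ) : ℚ)
        else 0 := by
    by_cases hdN : N ≤ d 0
    · rw [if_pos hdN, Nat.cast_inj]
      apply card_cons PStep.NE _ _ (fun l hl => hl.1.2.2.1)
      intro t
      have hii : i - 1 + 1 = i := by omega
      rw [hii]
      simp only [hC]
      constructor
      · rintro ⟨⟨hsp, hP, _, hM, hS⟩, h1⟩
        rw [get1_cons PStep.NE t] at h1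
        have hspt := (special_NE (by omega) (by omega) t (by rw [h1]; simp)).mp hsp
        rw [show i + 1 - 1 = i from rfl] at hspt
        have hPt : numPeaks t = N := by rw [numPeaks_NE_NE t h1] at hP; exact hP
        have hMt : majorIndex t = d 0 := by
          rw [majorIndex_NE_NE t h1, hPt] at hM; omega
        have hSt : southSteps t = d 1 := by
          rw [southSteps_cons_ne (by decide) t] at hS; exact hS
        exact ⟨hspt.1, hPt, by rw [head?_eq_zero]; exact h1, by omega, hSt⟩
      · rintro ⟨hsp, hPt, hht, hMt, hSt⟩
        have h0 : t[0]? = some PStep.NE := by rw [← head?_eq_zero]; exact hht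
        have htne : t ≠ [] := by rintro rfl; simp at hht
        have hsp' : SpecialPath k (i + 1) (PStep.NE :: t) := by
          apply (special_NE (by omega) (by omega) t (by rw [h0]; simp)).mpr
          rw [show i + 1 - 1 = i from rfl]
          exact ⟨hsp, htne⟩
        refine ⟨⟨hsp', ?_, rfl, ?_, ?_⟩,
          by rw [get1_cons PStep.NE t]; exact h0⟩
        · rw [numPeaks_NE_NE t h0]; exact hPt
        · rw [majorIndex_NE_NE t h0, hPt, hMt]; omega
        · rw [southSteps_cons_ne (by decide) t]; exact hSt
    · rw [if_neg hdN, show ((0 : ℚ) = ((0 : ℕ) : ℚ)) from by norm_num, Nat.cast_inj]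
      apply card_eq_zero
      rintro l ⟨hCl, h1⟩
      simp only [hC] at hCl
      obtain ⟨hsp, hP, hhead, hM, hS⟩ := hCl
      obtain ⟨t, rfl⟩ := head_destruct hhead
      rw [get1_cons PStep.NE t] at h1
      rw [numPeaks_NE_NE t h1] at hP
      rw [majorIndex_NE_NE t h1, hP] at hM
      have := numPeaks_le_majorIndex t
      omega
  have e2 : ((Nat.card {l : List PStep //
        (C l ∧ ¬ l[1]? = some PStep.NE) ∧ l[1]? = some PStep.S} : ℕ) : ℚ)
      = if 1 ≤ d 1 then
          ((Nat.card {t : List PStep // SpecialPath k (i + 1) t ∧ numPeaks t = N - 1 ∧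
            majorIndex t = d 0 ∧ southSteps t = d 1 - 1} : ℕ) : ℚ)
        else 0 := by
    by_cases hd1 : 1 ≤ d 1
    · rw [if_pos hd1, Nat.cast_inj]
      have step1 : Nat.card {l : List PStep //
            (C l ∧ ¬ l[1]? = some PStep.NE) ∧ l[1]? = some PStep.S}
          = Nat.card {t : List PStep //
            (C (PStep.NE :: t) ∧ ¬ (PStep.NE :: t)[1]? = some PStep.NE) ∧
              (PStep.NE :: t)[1]? = some PStep.S} :=
        card_cons PStep.NE _ _ (fun l hl => hl.1.1.2.2.1) (fun t => Iff.rfl)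
      rw [step1]
      apply card_cons PStep.S _ _ (fun t ht => by
        have h2 := ht.2
        rw [get1_cons PStep.NE t] at h2
        rw [head?_eq_zero]; exact h2)
      intro r
      simp only [hC]
      constructor
      · rintro ⟨⟨⟨hsp, hP, _, hM, hS⟩, _⟩, _⟩
        have hsp' := (special_NE_S (by omega) (by omega) r).mp hsp
        have hPr : numPeaks r = N - 1 := by
          rw [numPeaks_NE_peak _ (Or.inr (by simp)), numPeaks_cons_ne (by decide) r] at hP
          omega
        have hMr : majorIndex r = d 0 := by
          rw [majorIndex_NE_peak _ (Or.inr (by simp)), numPeaks_cons_ne (by decide) r,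
            majorIndex_cons_ne (by decide) r] at hM
          simp only [stepDx] at hM
          omega
        have hSr : southSteps r = d 1 - 1 := by
          rw [southSteps_cons_ne (by decide) _, southSteps_S_cons] at hS
          omega
        exact ⟨hsp', hPr, hMr, hSr⟩
      · rintro ⟨hsp, hPr, hMr, hSr⟩
        refine ⟨⟨⟨(special_NE_S (by omega) (by omega) r).mpr hsp, ?_, rfl, ?_, ?_⟩,
          by simp⟩, by simp⟩
        · rw [numPeaks_NE_peak _ (Or.inr (by simp)), numPeaks_cons_ne (by decide) r, hPr]
          omega
        · rw [majorIndex_NE_peak _ (Or.inr (by simp)), numPeaks_cons_ne (by decide) r,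
            majorIndex_cons_ne (by decide) r, hPr, hMr]
          simp only [stepDx]
          omega
        · rw [southSteps_cons_ne (by decide) _, southSteps_S_cons, hSr]
          omega
    · rw [if_neg hd1, show ((0 : ℚ) = ((0 : ℕ) : ℚ)) from by norm_num, Nat.cast_inj]
      apply card_eq_zero
      rintro l ⟨⟨hCl, _⟩, h1⟩
      simp only [hC] at hCl
      obtain ⟨_, _, _, _, hS⟩ := hCl
      have hS0 : southSteps l = 0 := by omega
      have hmem : PStep.S ∈ l := mem_of_getElem?' h1
      rw [southSteps, List.count_eq_zero] at hS0
      exact hS0 hmem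
  have e3 : ((Nat.card {l : List PStep //
        (C l ∧ ¬ l[1]? = some PStep.NE) ∧ ¬ l[1]? = some PStep.S} : ℕ) : ℚ)
      = if N - 1 ≤ d 0 then
          ((Nat.card {t : List PStep // SpecialPath k (i + 1) t ∧ numPeaks t = N - 1 ∧
            majorIndex t = d 0 - (N - 1) ∧ southSteps t = d 1} : ℕ) : ℚ)
        else 0 := by
    have conv : Nat.card {l : List PStep //
          (C l ∧ ¬ l[1]? = some PStep.NE) ∧ ¬ l[1]? = some PStep.S}
        = Nat.card {l : List PStep // C l ∧ l[1]? = some PStep.SE} := by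
      apply card_eq_iff
      intro l
      constructor
      · rintro ⟨⟨hCl, hnNE⟩, hnS⟩
        refine ⟨hCl, ?_⟩
        simp only [hC] at hCl
        obtain ⟨t, rfl⟩ := head_destruct hCl.2.2.1
        have hv : ValidPath (k - (i + 1)) (PStep.NE :: t) := hCl.1.1
        rcases second_cases hv with hh | hh | hh
        · exact absurd (by
            rw [get1_cons PStep.NE t, ← head?_eq_zero]; exact hh) hnNE
        · rw [get1_cons PStep.NE t, ← head?_eq_zero]; exact hh
        · exact absurd (by
            rw [get1_cons PStep.NE t, ← head?_eq_zero]; exact hh) hnS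
      · rintro ⟨hCl, hSE⟩
        exact ⟨⟨hCl, by rw [hSE]; simp⟩, by rw [hSE]; simp⟩
    rw [conv]
    by_cases hdN1 : N - 1 ≤ d 0
    · rw [if_pos hdN1, Nat.cast_inj]
      have step1 : Nat.card {l : List PStep // C l ∧ l[1]? = some PStep.SE}
          = Nat.card {t : List PStep //
              C (PStep.NE :: t) ∧ (PStep.NE :: t)[1]? = some PStep.SE} :=
        card_cons PStep.NE _ _ (fun l hl => hl.1.2.2.1) (fun t => Iff.rfl)
      rw [step1]
      apply card_cons PStep.SE _ _ (fun t ht => by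
        have h2 := ht.2
        rw [get1_cons PStep.NE t] at h2
        rw [head?_eq_zero]; exact h2)
      intro r
      simp only [hC]
      constructor
      · rintro ⟨⟨hsp, hP, _, hM, hS⟩, _⟩
        have hsp' := (special_NE_SE (by omega) (by omega) r).mp hsp
        have hPr : numPeaks r = N - 1 := by
          rw [numPeaks_NE_peak _ (Or.inl (by simp)), numPeaks_cons_ne (by decide) r] at hP
          omega
        have hMr : majorIndex r = d 0 - (N - 1) := by
          rw [majorIndex_NE_peak _ (Or.inl (by simp)), numPeaks_cons_ne (by decide) r,
            majorIndex_cons_ne (by decide) r] at hM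
          simp only [stepDx, one_mul] at hM
          omega
        have hSr : southSteps r = d 1 := by
          rw [southSteps_cons_ne (by decide) _, southSteps_cons_ne (by decide) _] at hS
          exact hS
        exact ⟨hsp', hPr, hMr, hSr⟩
      · rintro ⟨hsp, hPr, hMr, hSr⟩
        refine ⟨⟨(special_NE_SE (by omega) (by omega) r).mpr hsp, ?_, rfl, ?_, ?_⟩, by simp⟩
        · rw [numPeaks_NE_peak _ (Or.inl (by simp)), numPeaks_cons_ne (by decide) r, hPr]
          omega
        · rw [majorIndex_NE_peak _ (Or.inl (by simp)), numPeaks_cons_ne (by decide) r,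
            majorIndex_cons_ne (by decide) r, hPr, hMr]
          simp only [stepDx, one_mul]
          omega
        · rw [southSteps_cons_ne (by decide) _, southSteps_cons_ne (by decide) _]
          exact hSr
    · rw [if_neg hdN1, show ((0 : ℚ) = ((0 : ℕ) : ℚ)) from by norm_num, Nat.cast_inj]
      apply card_eq_zero
      rintro l ⟨hCl, h1⟩
      simp only [hC] at hCl
      obtain ⟨hsp, hP, hhead, hM, hS⟩ := hCl
      obtain ⟨t, rfl⟩ := head_destruct hhead
      rw [get1_cons PStep.NE t] at h1
      obtain ⟨r, rfl⟩ := get0_destruct h1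
      rw [numPeaks_NE_peak _ (Or.inl (by simp)), numPeaks_cons_ne (by decide) r] at hP
      rw [majorIndex_NE_peak _ (Or.inl (by simp)), numPeaks_cons_ne (by decide) r,
        majorIndex_cons_ne (by decide) r] at hM
      simp only [stepDx, one_mul] at hM
      omega
  rw [hsplit]
  push_cast
  rw [e1, e2, e3]

end Stmt3
open MvPowerSeries in
/-- **Proposition 3.1.** The recurrences satisfied by the path generating functions
`Ē_{k,i}(N)` and `Γ̄_{k,i}(N)`, with `q = X 0` and `a = X 1`. -/
theorem path_recurrences (k : ℕ) (hk : 1 ≤ k) :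
    (∀ i, 1 ≤ i → i ≤ k → EgfP k i 0 = 1) ∧
    (∀ i N, 1 ≤ i → i < k →
      EgfP k i N = (X 0 : MvPowerSeries (Fin 2) ℚ) ^ N * EgfP k (i + 1) N +
        (X 0 : MvPowerSeries (Fin 2) ℚ) ^ N * GgfP k (i - 1) N) ∧
    (∀ i N, 0 < i → i < k → 1 ≤ N →
      GgfP k i N = (X 0 : MvPowerSeries (Fin 2) ℚ) ^ N * GgfP k (i - 1) N +
        ((X 1 : MvPowerSeries (Fin 2) ℚ) + (X 0 : MvPowerSeries (Fin 2) ℚ) ^ (N - 1)) *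
          EgfP k (i + 1) (N - 1)) ∧
    (∀ N, 1 ≤ N →
      EgfP k k N = (X 0 : MvPowerSeries (Fin 2) ℚ) ^ N *
        (1 - (X 0 : MvPowerSeries (Fin 2) ℚ) ^ N)⁻¹ * GgfP k (k - 1) N) ∧
    (∀ N, GgfP k 0 N = 0) := by
  refine ⟨fun i h1 h2 => stmt1 k i h1 h2,
    fun i N h1 h2 => stmt2 k hk i N h1 h2,
    fun i N h0 h1 h2 => stmt3 k hk i N h0 h1 h2,
    fun N hN => stmt4 k hk N hN,
    fun N => stmt5 k hk N⟩

end Paper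
end

section
/- For integers k ≥ i ≥ 1 and complex a, q with 0 < |q| < 1 and a such that all Pochhammer symbols appearing are nonzero (e.g. a > 0 real), J_{k,i}(−a,1,q) = ((−aq;q)_∞/(q;q)_∞) Σ_{n=−∞}^{∞} (−1)^n a^n q^{kn² + n(k+1−i)} (−1/a;q)_n / (−aq;q)_n. -/
namespace Paper

open scoped Classical

/-- The infinite q-Pochhammer symbol `(x;q)_∞ = ∏_{i≥0} (1 - x qⁱ)`. -/
noncomputable def qPochInf (x q : ℂ) : ℂ := ∏' i : ℕ, (1 - x * q ^ i)

/-- The finite q-Pochhammer symbol `(x;q)_N = ∏_{i=0}^{N-1} (1 - x qⁱ)`. -/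
noncomputable def qPochN (x q : ℂ) (N : ℕ) : ℂ := ∏ i ∈ Finset.range N, (1 - x * q ^ i)

/-- The q-Pochhammer symbol with arbitrary integer index,
`(x;q)_n = (x;q)_∞ / (x qⁿ;q)_∞`. -/
noncomputable def qPochZ (x q : ℂ) (n : ℤ) : ℂ := qPochInf x q / qPochInf (x * q ^ n) q



open Filter Topology Finset



private lemma hasProd_zero_of_eq_zero {f : ℕ → ℂ} (j₀ : ℕ) (h : f j₀ = 0) : HasProd f 0 := by
  have ev : ∀ᶠ s : Finset ℕ in atTop, ∏ i ∈ s, f i = (0 : ℂ) := by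
    filter_upwards [eventually_ge_atTop ({j₀} : Finset ℕ)] with s hs
    exact Finset.prod_eq_zero (hs (Finset.mem_singleton_self j₀)) h
  exact Tendsto.congr' (ev.mono fun s hs => hs.symm) tendsto_const_nhds

private lemma summable_norm_geom (y q : ℂ) (hq1 : ‖q‖ < 1) :
    Summable (fun j : ℕ => ‖y * q ^ j‖) := by
  have : Summable (fun j : ℕ => ‖y‖ * ‖q‖ ^ j) :=
    (summable_geometric_of_lt_one (norm_nonneg q) hq1).mul_left ‖y‖
  refine this.congr fun j => ?_
  rw [norm_mul, norm_pow]

private lemma summable_log_aux (y q : ℂ) (hq1 : ‖q‖ < 1) (h : ∀ j : ℕ, 1 - y * q ^ j ≠ 0) :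
    Summable (fun j : ℕ => Complex.log (1 - y * q ^ j)) := by
  have hgeom := summable_norm_geom y q hq1
  apply Summable.of_norm_bounded_eventually_nat (g := fun j => (3/2) * ‖y * q ^ j‖)
    (hgeom.mul_left _)
  have hto : Tendsto (fun j : ℕ => ‖y * q ^ j‖) atTop (𝓝 0) := hgeom.tendsto_atTop_zero
  filter_upwards [hto.eventually_le_const (by norm_num : (0:ℝ) < 1/2)] with j hj
  have : Complex.log (1 - y * q ^ j) = Complex.log (1 + (- (y * q ^ j))) := by ring_nf
  rw [this]
  have := Complex.norm_log_one_add_half_le_self (z := -(y * q ^ j)) (by rwa [norm_neg])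
  simpa [norm_neg] using this

private lemma multipliable_aux (y q : ℂ) (hq1 : ‖q‖ < 1) :
    Multipliable (fun j : ℕ => 1 - y * q ^ j) := by
  by_cases h : ∀ j : ℕ, 1 - y * q ^ j ≠ 0
  · exact Complex.multipliable_of_summable_log (summable_log_aux y q hq1 h)
  · push_neg at h
    obtain ⟨j₀, hj₀⟩ := h
    exact ⟨0, hasProd_zero_of_eq_zero j₀ hj₀⟩

private lemma qPochInf_ne_zero (y q : ℂ) (hq1 : ‖q‖ < 1) (h : ∀ j : ℕ, 1 - y * q ^ j ≠ 0) :
    qPochInf y q ≠ 0 := by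
  have := Complex.cexp_tsum_eq_tprod (f := fun j => 1 - y * q ^ j)
      (fun j => h j) (summable_log_aux y q hq1 h)
  rw [qPochInf, ← this]
  exact Complex.exp_ne_zero _

private lemma qPochInf_split (y q : ℂ) (hq1 : ‖q‖ < 1) (n : ℕ) :
    qPochInf y q = qPochN y q n * qPochInf (y * q ^ n) q := by
  have h2 : Multipliable (fun j : ℕ => 1 - y * q ^ (j + n)) := by
    refine (multipliable_aux (y * q ^ n) q hq1).congr fun j => ?_
    rw [pow_add]; ring
  have := Multipliable.prod_mul_tprod_nat_mul' (f := fun j : ℕ => 1 - y * q ^ j) (k := n) h2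
  rw [qPochInf, ← this, qPochN, qPochInf]
  congr 1
  refine tprod_congr fun j => ?_
  simp only [pow_add]
  ring

private lemma qPochInf_peel (y q : ℂ) (hq1 : ‖q‖ < 1) :
    qPochInf y q = (1 - y) * qPochInf (y * q) q := by
  have := qPochInf_split y q hq1 1
  simpa [qPochN] using this

private lemma tendsto_qexp (q : ℂ) (hq1 : ‖q‖ < 1) (e : ℕ → ℕ) (he : ∀ n, n ≤ e n) :
    Tendsto (fun n : ℕ => q ^ (e n)) atTop (𝓝 0) := by
  apply squeeze_zero_norm (a := fun n : ℕ => ‖q‖ ^ n)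
  · intro n
    rw [norm_pow]
    exact pow_le_pow_of_le_one (norm_nonneg q) hq1.le (he n)
  · exact tendsto_pow_atTop_nhds_zero_of_lt_one (norm_nonneg q) hq1

private lemma tendsto_one_addq (q : ℂ) (hq1 : ‖q‖ < 1) (b : ℂ) (e : ℕ → ℕ)
    (he : ∀ n, n ≤ e n) :
    Tendsto (fun n : ℕ => 1 + b * q ^ (e n)) atTop (𝓝 1) := by
  have := ((tendsto_qexp q hq1 e he).const_mul b).const_add 1
  simpa using this

private lemma tendsto_one_subq (q : ℂ) (hq1 : ‖q‖ < 1) (e : ℕ → ℕ)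
    (he : ∀ n, n ≤ e n) :
    Tendsto (fun n : ℕ => 1 - q ^ (e n)) atTop (𝓝 1) := by
  have := tendsto_one_addq q hq1 (-1) e he
  refine this.congr fun n => by ring

private lemma summable_of_ratio (u ρ : ℕ → ℂ) (h : ∀ n, u (n + 1) = ρ n * u n)
    (hρ : Tendsto ρ atTop (𝓝 0)) : Summable u := by
  refine summable_of_ratio_norm_eventually_le (r := 1/2) (by norm_num) ?_
  have hev : ∀ᶠ n in atTop, ‖ρ n‖ ≤ 1/2 := by
    have := hρ.norm
    simp only [norm_zero] at this
    exact this.eventually_le_const (by norm_num)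
  filter_upwards [hev] with n hn
  rw [h n, norm_mul]
  exact mul_le_mul_of_nonneg_right hn (norm_nonneg _)



private def En (k j n : ℕ) : ℕ := k * n^2 + (k + 1 - j) * n
private def Sm (m : ℕ) : ℕ := ∑ j ∈ Finset.range m, (j+1)

noncomputable def gN (a q : ℂ) (m : ℕ) : ℂ := qPochInf (-(a*q) * q^m) q
noncomputable def FN (a q : ℂ) (n : ℕ) : ℂ := qPochN (-(1/a)) q n
noncomputable def AT (k j : ℕ) (a q : ℂ) (n : ℕ) : ℂ :=
  q^(En k j n) * (-a)^n * (1 - q^((2*n+1)*j)) * FN a q n * gN a q (n+1)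
noncomputable def CT (k i : ℕ) (a q : ℂ) (n : ℕ) : ℂ :=
  (-1)^n * a^n * q^(En k i n) * FN a q n * gN a q n
noncomputable def CTn (k i : ℕ) (a q : ℂ) (m : ℕ) : ℂ :=
  (-1)^(m+1) * a^(m+1) * q^((m+1)*(k*m+i)) * FN a q (m+1) * gN a q (m+1)

private lemma gN_peel (a q : ℂ) (hq1 : ‖q‖ < 1) (m : ℕ) :
    gN a q m = (1 + a * q^(m+1)) * gN a q (m+1) := by
  have h := qPochInf_peel (-(a*q) * q^m) q hq1
  have e1 : 1 - (-(a*q) * q^m) = 1 + a * q^(m+1) := by ring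
  have e2 : (-(a*q) * q^m) * q = -(a*q) * q^(m+1) := by ring
  simp only [gN]
  rw [h, e1, e2]

private lemma FN_succ (a q : ℂ) (n : ℕ) :
    FN a q (n+1) = FN a q n * (1 + a⁻¹ * q^n) := by
  simp only [FN, qPochN, Finset.prod_range_succ]
  congr 1
  rw [one_div]
  ring

private lemma prod_swap_aux (q b : ℂ) (hq : q ≠ 0) (hb : b ≠ 0) (n : ℕ) :
    (∏ j ∈ Finset.range n, (1 + b * q^(-(j:ℤ)-1))) * q^(Sm n) =
      b^n * ∏ j ∈ Finset.range n, (1 + b⁻¹ * q^(j+1)) := by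
  induction n with
  | zero => simp [Sm]
  | succ n ih =>
    have hS : Sm (n+1) = Sm n + (n+1) := Finset.sum_range_succ _ n
    rw [Finset.prod_range_succ, Finset.prod_range_succ, hS, pow_add]
    have h0 : (q:ℂ)^(-(n:ℤ)-1) * q^(n+1) = 1 := by
      rw [← zpow_natCast q (n+1), ← zpow_add₀ hq]
      norm_num
    have hbb : b * b⁻¹ = 1 := mul_inv_cancel₀ hb
    have key : (1 + b * q^(-(n:ℤ)-1)) * q^(n+1) = b * (1 + b⁻¹ * q^(n+1)) := by
      linear_combination b * h0 - q^(n+1) * hbb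
    calc (∏ j ∈ Finset.range n, (1 + b * q^(-(j:ℤ)-1))) * (1 + b * q^(-(n:ℤ)-1)) *
          (q^(Sm n) * q^(n+1))
        = ((∏ j ∈ Finset.range n, (1 + b * q^(-(j:ℤ)-1))) * q^(Sm n)) *
          ((1 + b * q^(-(n:ℤ)-1)) * q^(n+1)) := by ring
      _ = (b^n * ∏ j ∈ Finset.range n, (1 + b⁻¹ * q^(j+1))) * (b * (1 + b⁻¹ * q^(n+1))) := by
          rw [ih, key]
      _ = b^(n+1) * ((∏ j ∈ Finset.range n, (1 + b⁻¹ * q^(j+1))) * (1 + b⁻¹ * q^(n+1))) := by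
          ring

private lemma PRD (a q : ℂ) (hq : q ≠ 0) (ha : a ≠ 0) (m : ℕ) :
    qPochN (-(a*q) * q^(-(m:ℤ)-1)) q (2*m+2)
      = qPochN (-(1/a) * q^(-(m:ℤ)-1)) q (m+1) * a^(2*m+2) * q^(m+1) * FN a q (m+1) := by
  have hQ : qPochN (-(a*q) * q^(-(m:ℤ)-1)) q (2*m+2)
      = ∏ j ∈ Finset.range (2*m+2), (1 + a * q^((j:ℤ)-m)) := by
    refine Finset.prod_congr rfl fun j _ => ?_
    have e : (q:ℂ) * q^(-(m:ℤ)-1) * q^(j:ℕ) = q^((j:ℤ)-m) := by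
      rw [← zpow_natCast q j, ← zpow_one_add₀ hq, ← zpow_add₀ hq]
      congr 1
      ring
    calc 1 - -(a*q) * q^(-(m:ℤ)-1) * q^(j:ℕ)
        = 1 + a * ((q:ℂ) * q^(-(m:ℤ)-1) * q^(j:ℕ)) := by ring
      _ = 1 + a * q^((j:ℤ)-m) := by rw [e]
  have hsplit : (∏ j ∈ Finset.range (2*m+2), (1 + a * q^((j:ℤ)-m)))
      = (∏ j ∈ Finset.range m, (1 + a * q^((j:ℤ)-m))) *
        (∏ j ∈ Finset.range (m+2), (1 + a * q^(j:ℕ))) := by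
    rw [show 2*m+2 = m + (m+2) by ring, Finset.prod_range_add]
    congr 1
    refine Finset.prod_congr rfl fun j _ => ?_
    congr 1
    rw [← zpow_natCast q j]
    congr 1
    push_cast
    ring
  have hrefl : (∏ j ∈ Finset.range m, (1 + a * q^((j:ℤ)-m)))
      = ∏ j ∈ Finset.range m, (1 + a * q^(-(j:ℤ)-1)) := by
    rw [← Finset.prod_range_reflect]
    refine Finset.prod_congr rfl fun j hj => ?_
    have hj' : j < m := Finset.mem_range.mp hj
    have e : m - 1 - j = m - (j+1) := by omega
    congr 2
    rw [e, Nat.cast_sub (by omega : j + 1 ≤ m)]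
    push_cast
    ring
  have hPrefl : qPochN (-(1/a) * q^(-(m:ℤ)-1)) q (m+1)
      = ∏ j ∈ Finset.range (m+1), (1 + a⁻¹ * q^(-(j:ℤ)-1)) := by
    rw [qPochN, ← Finset.prod_range_reflect]
    refine Finset.prod_congr rfl fun j hj => ?_
    have hj' : j < m + 1 := Finset.mem_range.mp hj
    have e0 : m + 1 - 1 - j = m - j := by omega
    rw [e0]
    have e : -(1/a) * q^(-(m:ℤ)-1) * q^((m - j : ℕ)) = -(a⁻¹ * q^(-(j:ℤ)-1)) := by
      rw [← zpow_natCast q (m - j), mul_assoc, ← zpow_add₀ hq, one_div]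
      rw [Nat.cast_sub (by omega : j ≤ m)]
      congr 2
      ring
    rw [e]
    ring
  have e1 := prod_swap_aux q a hq ha m
  have e2 := prod_swap_aux q a⁻¹ hq (inv_ne_zero ha) (m+1)
  rw [inv_inv] at e2
  have hF : FN a q (m+1) = (∏ j ∈ Finset.range m, (1 + a⁻¹ * q^(j+1))) * (1 + a⁻¹) := by
    rw [FN, qPochN, Finset.prod_range_succ']
    rw [show ((1:ℂ) - -(1/a) * q^0) = 1 + a⁻¹ by rw [pow_zero, one_div]; ring]
    congr 1
    refine Finset.prod_congr rfl fun j _ => ?_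
    rw [one_div]
    ring
  have hQ2 : (∏ j ∈ Finset.range (m+2), (1 + a * q^(j:ℕ)))
      = (∏ j ∈ Finset.range (m+1), (1 + a * q^(j+1))) * (1 + a) := by
    rw [Finset.prod_range_succ']
    simp
  rw [hQ, hsplit, hrefl, hQ2, hPrefl, hF]
  have hS : Sm (m+1) = Sm m + (m+1) := Finset.sum_range_succ _ m
  have e2' : (∏ j ∈ Finset.range (m+1), (1 + a⁻¹ * q^(-(j:ℤ)-1))) * (q^(Sm m) * q^(m+1))
      = a⁻¹^(m+1) * ∏ j ∈ Finset.range (m+1), (1 + a * q^(j+1)) := by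
    rw [← pow_add, ← hS]; exact e2
  have haa : a * a⁻¹ = 1 := mul_inv_cancel₀ ha
  have hinv : a^(m+1) * a⁻¹^(m+1) = 1 := by rw [← mul_pow, haa, one_pow]
  have hu : (q:ℂ)^(Sm m) * ((q:ℂ)^(Sm m) * q^(m+1)) ≠ 0 :=
    mul_ne_zero (pow_ne_zero _ hq) (mul_ne_zero (pow_ne_zero _ hq) (pow_ne_zero _ hq))
  apply mul_right_cancel₀ hu
  linear_combination
    ((∏ j ∈ Finset.range (m+1), (1 + a * q^(j+1))) * (1 + a) * q^(Sm m) * q^(m+1)) * e1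
    - (a^(2*m+2) * (∏ j ∈ Finset.range m, (1 + a⁻¹ * q^(j+1))) * (1 + a⁻¹) * q^(Sm m)
        * q^(m+1)) * e2'
    - ((∏ j ∈ Finset.range m, (1 + a⁻¹ * q^(j+1))) *
       (∏ j ∈ Finset.range (m+1), (1 + a * q^(j+1))) * q^(Sm m) * q^(m+1) * a^m) * haa
    - ((∏ j ∈ Finset.range m, (1 + a⁻¹ * q^(j+1))) *
       (∏ j ∈ Finset.range (m+1), (1 + a * q^(j+1))) * q^(Sm m) * q^(m+1) * (1 + a⁻¹)
        * a^(m+1)) * hinv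



-- The key telescoping identity: with i = s+1, k = s+1+u,
-- AT_{k,i}(n) + a q AT_{k,i-1}(n) = CT n + CTn n.
private lemma STEP (s u : ℕ) (a q : ℂ) (hq1 : ‖q‖ < 1) (ha : a ≠ 0) (n : ℕ) :
    AT (s+1+u) (s+1) a q n + a*q*AT (s+1+u) s a q n
      = CT (s+1+u) (s+1) a q n + CTn (s+1+u) (s+1) a q n := by
  have hE1 : En (s+1+u) (s+1) n = (s+1+u)*n^2 + (u+1)*n := by
    simp only [En]
    congr 2
    omega
  have hE0 : En (s+1+u) s n = (s+1+u)*n^2 + (u+2)*n := by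
    simp only [En]
    congr 2
    omega
  have haa : a * a⁻¹ = 1 := mul_inv_cancel₀ ha
  rw [AT, AT, CT, CTn, hE1, hE0, FN_succ a q n, gN_peel a q hq1 n]
  linear_combination ((-1:ℂ))^n * a^n * FN a q n * gN a q (n+1) *
    q^((n+1)*((s+1+u)*n+(s+1))) * q^n * haa

private lemma ratio_AT (s u : ℕ) (a q : ℂ) (hq1 : ‖q‖ < 1) (n : ℕ) :
    ((1 + a*q^(n+2)) * (1 - q^((2*n+1)*(s+1)))) * AT (s+1+u) (s+1) a q (n+1)
      = ((-a) * q^(2*(s+1+u)*n+(s+2*u+2)) * (1 + a⁻¹*q^n) * (1 - q^((2*n+3)*(s+1))))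
        * AT (s+1+u) (s+1) a q n := by
  have hE : ∀ m : ℕ, En (s+1+u) (s+1) m = (s+1+u)*m^2 + (u+1)*m := by
    intro m
    simp only [En]
    congr 2
    omega
  rw [AT, AT, hE, hE, FN_succ a q n, gN_peel a q hq1 (n+1)]
  ring

private lemma ratio_CT (s u : ℕ) (a q : ℂ) (hq1 : ‖q‖ < 1) (n : ℕ) :
    (1 + a*q^(n+1)) * CT (s+1+u) (s+1) a q (n+1)
      = ((-a) * q^(2*(s+1+u)*n+(s+2*u+2)) * (1 + a⁻¹*q^n)) * CT (s+1+u) (s+1) a q n := by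
  have hE : ∀ m : ℕ, En (s+1+u) (s+1) m = (s+1+u)*m^2 + (u+1)*m := by
    intro m
    simp only [En]
    congr 2
    omega
  rw [CT, CT, hE, hE, FN_succ a q n, gN_peel a q hq1 n]
  ring

private lemma ratio_CTn (k i : ℕ) (a q : ℂ) (hq1 : ‖q‖ < 1) (n : ℕ) :
    (1 + a*q^(n+2)) * CTn k i a q (n+1)
      = ((-a) * q^(2*k*n+(2*k+i)) * (1 + a⁻¹*q^(n+1))) * CTn k i a q n := by
  rw [CTn, CTn, FN_succ a q (n+1), gN_peel a q hq1 (n+1)]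
  ring



private lemma summable_AT (k j : ℕ) (a q : ℂ) (hq1 : ‖q‖ < 1)
    (hfacN : ∀ m : ℕ, 1 + a * q^m ≠ 0) (hqj : ∀ m : ℕ, 1 ≤ m → (1:ℂ) - q^m ≠ 0)
    (hj : 1 ≤ j) (hjk : j ≤ k) : Summable (AT k j a q) := by
  obtain ⟨s, rfl⟩ : ∃ s, j = s + 1 := ⟨j - 1, by omega⟩
  obtain ⟨u, rfl⟩ : ∃ u, k = s + 1 + u := ⟨k - (s+1), by omega⟩
  apply summable_of_ratio _ (fun n : ℕ =>
    ((-a) * q^(2*(s+1+u)*n+(s+2*u+2)) * (1 + a⁻¹*q^n) * (1 - q^((2*n+3)*(s+1))))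
      / ((1 + a*q^(n+2)) * (1 - q^((2*n+1)*(s+1)))))
  · intro n
    rw [div_mul_eq_mul_div, eq_div_iff
      (mul_ne_zero (hfacN (n+2)) (hqj _ (Nat.one_le_iff_ne_zero.mpr (by positivity))))]
    linear_combination ratio_AT s u a q hq1 n
  · have hnum : Tendsto (fun n : ℕ =>
        (-a) * q^(2*(s+1+u)*n+(s+2*u+2)) * (1 + a⁻¹*q^n) * (1 - q^((2*n+3)*(s+1))))
        atTop (𝓝 0) := by
      have h1 := tendsto_qexp q hq1 (fun n => 2*(s+1+u)*n+(s+2*u+2))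
        (fun n => le_trans (Nat.le_mul_of_pos_left n (by omega)) (Nat.le_add_right _ _))
      have h2 := tendsto_one_addq q hq1 a⁻¹ (fun n => n) (fun n => le_refl n)
      have h3 := tendsto_one_subq q hq1 (fun n => (2*n+3)*(s+1))
        (fun n => le_trans (by omega) (Nat.le_mul_of_pos_right (2*n+3) (by omega)))
      have := ((h1.const_mul (-a)).mul h2).mul h3
      simpa using this
    have hden : Tendsto (fun n : ℕ => (1 + a*q^(n+2)) * (1 - q^((2*n+1)*(s+1))))
        atTop (𝓝 1) := by
      have h4 := tendsto_one_addq q hq1 a (fun n => n+2) (fun n => Nat.le_add_right n 2)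
      have h5 := tendsto_one_subq q hq1 (fun n => (2*n+1)*(s+1))
        (fun n => le_trans (by omega) (Nat.le_mul_of_pos_right (2*n+1) (by omega)))
      have := h4.mul h5
      simpa using this
    simpa [Pi.div_def] using hnum.div hden one_ne_zero

private lemma summable_AT0 (k : ℕ) (a q : ℂ) : Summable (AT k 0 a q) := by
  have : ∀ n : ℕ, AT k 0 a q n = 0 := by
    intro n
    simp [AT]
  exact summable_zero.congr fun n => (this n).symm

private lemma summable_CT (k i : ℕ) (a q : ℂ) (hq1 : ‖q‖ < 1)
    (hfacN : ∀ m : ℕ, 1 + a * q^m ≠ 0)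
    (hi : 1 ≤ i) (hik : i ≤ k) : Summable (CT k i a q) := by
  obtain ⟨s, rfl⟩ : ∃ s, i = s + 1 := ⟨i - 1, by omega⟩
  obtain ⟨u, rfl⟩ : ∃ u, k = s + 1 + u := ⟨k - (s+1), by omega⟩
  apply summable_of_ratio _ (fun n : ℕ =>
    ((-a) * q^(2*(s+1+u)*n+(s+2*u+2)) * (1 + a⁻¹*q^n)) / (1 + a*q^(n+1)))
  · intro n
    rw [div_mul_eq_mul_div, eq_div_iff (hfacN (n+1))]
    linear_combination ratio_CT s u a q hq1 n
  · have hnum : Tendsto (fun n : ℕ =>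
        (-a) * q^(2*(s+1+u)*n+(s+2*u+2)) * (1 + a⁻¹*q^n)) atTop (𝓝 0) := by
      have h1 := tendsto_qexp q hq1 (fun n => 2*(s+1+u)*n+(s+2*u+2))
        (fun n => le_trans (Nat.le_mul_of_pos_left n (by omega)) (Nat.le_add_right _ _))
      have h2 := tendsto_one_addq q hq1 a⁻¹ (fun n => n) (fun n => le_refl n)
      have := (h1.const_mul (-a)).mul h2
      simpa using this
    have hden : Tendsto (fun n : ℕ => 1 + a*q^(n+1)) atTop (𝓝 1) :=
      tendsto_one_addq q hq1 a (fun n => n+1) (fun n => Nat.le_add_right n 1)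
    simpa [Pi.div_def] using hnum.div hden one_ne_zero

private lemma summable_CTn (k i : ℕ) (a q : ℂ) (hq1 : ‖q‖ < 1)
    (hfacN : ∀ m : ℕ, 1 + a * q^m ≠ 0)
    (hk : 1 ≤ k) : Summable (CTn k i a q) := by
  apply summable_of_ratio _ (fun n : ℕ =>
    ((-a) * q^(2*k*n+(2*k+i)) * (1 + a⁻¹*q^(n+1))) / (1 + a*q^(n+2)))
  · intro n
    rw [div_mul_eq_mul_div, eq_div_iff (hfacN (n+2))]
    linear_combination ratio_CTn k i a q hq1 n
  · have hnum : Tendsto (fun n : ℕ =>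
        (-a) * q^(2*k*n+(2*k+i)) * (1 + a⁻¹*q^(n+1))) atTop (𝓝 0) := by
      have h1 := tendsto_qexp q hq1 (fun n => 2*k*n+(2*k+i))
        (fun n => le_trans (Nat.le_mul_of_pos_left n (by omega)) (Nat.le_add_right _ _))
      have h2 := tendsto_one_addq q hq1 a⁻¹ (fun n => n+1) (fun n => Nat.le_add_right n 1)
      have := (h1.const_mul (-a)).mul h2
      simpa using this
    have hden : Tendsto (fun n : ℕ => 1 + a*q^(n+2)) atTop (𝓝 1) :=
      tendsto_one_addq q hq1 a (fun n => n+2) (fun n => Nat.le_add_right n 2)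
    simpa [Pi.div_def] using hnum.div hden one_ne_zero


/-- Andrews' function
`H_{k,i}(a,x,q) = Σ_{n≥0} x^{kn} q^{kn²+n-in} aⁿ (1-xⁱq^{2ni}) (axq^{n+1};q)_∞ (1/a;q)_n
                   / ((q;q)_n (xqⁿ;q)_∞)`. -/
noncomputable def Hgf (k i : ℕ) (a x q : ℂ) : ℂ :=
  ∑' n : ℕ, x ^ (k * n) * q ^ ((k : ℤ) * (n : ℤ) ^ 2 + (n : ℤ) - (i : ℤ) * (n : ℤ)) *
    a ^ n * (1 - x ^ i * q ^ (2 * n * i)) * qPochInf (a * x * q ^ (n + 1)) q *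
    qPochN (1 / a) q n / (qPochN q q n * qPochInf (x * q ^ n) q)

/-- Andrews' function `J_{k,i}(a,x,q) = H_{k,i}(a,xq,q) - axq H_{k,i-1}(a,xq,q)`. -/
noncomputable def Jgf (k i : ℕ) (a x q : ℂ) : ℂ :=
  Hgf k i a (x * q) q - a * x * q * Hgf k (i - 1) a (x * q) q

/-- `J_{k,i}(-a,1,q)` equals the right-hand side of equation (1.2). -/
theorem J_eq_E (k i : ℕ) (hi : 1 ≤ i) (hik : i ≤ k) (a q : ℂ)
    (hq0 : 0 < ‖q‖) (hq1 : ‖q‖ < 1) (ha : a ≠ 0)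
    (hpoch : ∀ m : ℤ, qPochZ (-(a * q)) q m ≠ 0) :
    Jgf k i (-a) 1 q =
      qPochInf (-(a * q)) q / qPochInf q q *
        ∑' n : ℤ, (-1 : ℂ) ^ n * a ^ n *
          q ^ ((k : ℤ) * n ^ 2 + ((k : ℤ) + 1 - (i : ℤ)) * n) *
          (qPochZ (-(1 / a)) q n / qPochZ (-(a * q)) q n) := by
  have hqne : q ≠ 0 := fun h => by rw [h, norm_zero] at hq0; exact lt_irrefl 0 hq0
  have hG : ∀ t : ℤ, qPochInf (-(a*q) * q^t) q ≠ 0 := by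
    intro t h0
    have h := hpoch t
    rw [qPochZ, h0, div_zero] at h
    exact h rfl
  have hInfaq : qPochInf (-(a*q)) q ≠ 0 := by
    intro h0
    have h := hpoch 0
    rw [qPochZ, h0, zero_div] at h
    exact h rfl
  have hqq : ∀ t : ℤ, (q:ℂ)^(t-1) * q = q^t := by
    intro t
    rw [zpow_sub_one₀ hqne, mul_assoc, inv_mul_cancel₀ hqne, mul_one]
  have hfac : ∀ t : ℤ, 1 + a * q^t ≠ 0 := by
    intro t
    have hp := qPochInf_peel (-(a*q) * q^(t-1)) q hq1
    have h1 : (1 : ℂ) - (-(a*q) * q^(t-1)) ≠ 0 := by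
      intro h0
      apply hG (t-1)
      rw [hp, h0, zero_mul]
    have e : (1:ℂ) - (-(a*q) * q^(t-1)) = 1 + a*q^t := by
      linear_combination a * hqq t
    rwa [e] at h1
  have haa : a * a⁻¹ = 1 := mul_inv_cancel₀ ha
  have hfacinv : ∀ t : ℤ, 1 + a⁻¹ * q^t ≠ 0 := by
    intro t h0
    apply hfac (-t)
    have e : (q:ℂ)^(-t) * q^t = 1 := by
      rw [← zpow_add₀ hqne]; simp
    have h2 : 1 + a*q^(-t) = a * q^(-t) * (1 + a⁻¹ * q^t) := by
      linear_combination (-(q^(-t) * q^t)) * haa - e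
    rw [h2, h0, mul_zero]
  have hIaT : ∀ t : ℤ, qPochInf (-(1/a) * q^t) q ≠ 0 := by
    intro t
    apply qPochInf_ne_zero _ q hq1
    intro j h0
    apply hfacinv (t + (j:ℤ))
    have e : -(1/a) * q^t * q^(j:ℕ) = -(a⁻¹ * q^(t+(j:ℤ))) := by
      rw [← zpow_natCast q j, mul_assoc, ← zpow_add₀ hqne, one_div, neg_mul]
    rw [e] at h0
    linear_combination h0
  have hIa0 : qPochInf (-(1/a)) q ≠ 0 := by
    have := hIaT 0
    simpa using this
  have hfacN : ∀ m : ℕ, 1 + a*q^m ≠ 0 := fun m => by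
    have := hfac (m:ℤ); rwa [zpow_natCast] at this
  have hfacinvN : ∀ m : ℕ, 1 + a⁻¹*q^m ≠ 0 := fun m => by
    have := hfacinv (m:ℤ); rwa [zpow_natCast] at this
  have hqj : ∀ m : ℕ, 1 ≤ m → (1:ℂ) - q^m ≠ 0 := by
    intro m hm h0
    have h1 : (q:ℂ)^m = 1 := by linear_combination -h0
    have h2 : ‖q‖^m = 1 := by rw [← norm_pow, h1, norm_one]
    have h3 : ‖q‖^m < 1 := pow_lt_one₀ (norm_nonneg q) hq1 (by omega)
    rw [h2] at h3
    exact lt_irrefl 1 h3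
  have gN_ne : ∀ m : ℕ, gN a q m ≠ 0 := by
    intro m
    have := hG (m:ℤ)
    rw [zpow_natCast] at this
    exact this
  obtain ⟨s, rfl⟩ : ∃ s, i = s + 1 := ⟨i - 1, by omega⟩
  obtain ⟨u, rfl⟩ : ∃ u, k = s + 1 + u := ⟨k - (s+1), by omega⟩
  have sum1 : Summable (AT (s+1+u) (s+1) a q) :=
    summable_AT _ _ a q hq1 hfacN hqj (by omega) (by omega)
  have sum0 : Summable (AT (s+1+u) s a q) := by
    rcases Nat.eq_zero_or_pos s with hs | hs
    · subst hs; exact summable_AT0 _ a q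
    · exact summable_AT _ _ a q hq1 hfacN hqj hs (by omega)
  have sumC : Summable (CT (s+1+u) (s+1) a q) :=
    summable_CT _ _ a q hq1 hfacN (by omega) (by omega)
  have sumD : Summable (CTn (s+1+u) (s+1) a q) :=
    summable_CTn _ _ a q hq1 hfacN (by omega)
  -- rewrite of Hgf at x = q
  have hH : ∀ j : ℕ, j ≤ s+1+u →
      Hgf (s+1+u) j (-a) q q = (∑' n:ℕ, AT (s+1+u) j a q n) / qPochInf q q := by
    intro j hj
    rw [Hgf, ← tsum_div_const]
    apply tsum_congr
    intro n
    rw [← qPochInf_split q q hq1 n]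
    congr 1
    have e1 : (q:ℂ)^((s+1+u)*n) * q^(((s+1+u:ℕ):ℤ)*((n:ℕ):ℤ)^2 + ((n:ℕ):ℤ) - ((j:ℕ):ℤ)*((n:ℕ):ℤ))
        = q^(En (s+1+u) j n) := by
      rw [← zpow_natCast q ((s+1+u)*n), ← zpow_add₀ hqne, ← zpow_natCast q (En (s+1+u) j n)]
      congr 1
      simp only [En]
      push_cast [Nat.cast_sub (show j ≤ (s+1+u)+1 by omega)]
      ring
    have e2 : (1:ℂ) - q^j * q^(2*n*j) = 1 - q^((2*n+1)*j) := by
      rw [← pow_add]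
      congr 2
      ring
    have e3 : qPochInf ((-a)*q*q^(n+1)) q = gN a q (n+1) := by
      show _ = qPochInf (-(a*q) * q^(n+1)) q
      congr 1
      ring
    have e4 : qPochN (1/(-a)) q n = FN a q n := by
      show _ = qPochN (-(1/a)) q n
      congr 1
      rw [one_div, one_div, inv_neg]
    rw [e2, e3, e4, AT]
    rw [e1]
    ring
  -- per-term identification of the bilateral sum
  have hcgN : ∀ n : ℕ, qPochInf (-(a*q)) q * ((-1:ℂ)^((n:ℕ):ℤ) * a^((n:ℕ):ℤ) *
      q^(((s+1+u:ℕ):ℤ) * ((n:ℕ):ℤ)^2 + (((s+1+u:ℕ):ℤ) + 1 - ((s+1:ℕ):ℤ)) * ((n:ℕ):ℤ)) *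
      (qPochZ (-(1/a)) q ((n:ℕ):ℤ) / qPochZ (-(a*q)) q ((n:ℕ):ℤ)))
      = CT (s+1+u) (s+1) a q n := by
    intro n
    have hz1 : qPochZ (-(1/a)) q ((n:ℕ):ℤ) = FN a q n := by
      rw [qPochZ, zpow_natCast, qPochInf_split (-(1/a)) q hq1 n]
      exact mul_div_cancel_right₀ _ (by have := hIaT (n:ℤ); rwa [zpow_natCast] at this)
    have hz2 : qPochZ (-(a*q)) q ((n:ℕ):ℤ) = qPochInf (-(a*q)) q / gN a q n := by
      rw [qPochZ, zpow_natCast]; rfl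
    have hE : q^(((s+1+u:ℕ):ℤ) * ((n:ℕ):ℤ)^2 + (((s+1+u:ℕ):ℤ) + 1 - ((s+1:ℕ):ℤ)) * ((n:ℕ):ℤ))
        = q^(En (s+1+u) (s+1) n) := by
      rw [← zpow_natCast q (En (s+1+u) (s+1) n)]
      congr 1
      simp only [En, show s+1+u+1-(s+1) = u+1 from by omega]
      push_cast
      ring
    rw [hz1, hz2, hE, zpow_natCast, zpow_natCast, CT]
    field_simp [hInfaq, gN_ne n]
  have hcgNeg : ∀ m : ℕ, qPochInf (-(a*q)) q * ((-1:ℂ)^(-((m:ℤ)+1)) * a^(-((m:ℤ)+1)) *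
      q^(((s+1+u:ℕ):ℤ) * (-((m:ℤ)+1))^2 + (((s+1+u:ℕ):ℤ) + 1 - ((s+1:ℕ):ℤ)) * (-((m:ℤ)+1))) *
      (qPochZ (-(1/a)) q (-((m:ℤ)+1)) / qPochZ (-(a*q)) q (-((m:ℤ)+1))))
      = CTn (s+1+u) (s+1) a q m := by
    intro m
    have hneg : -((m:ℤ)+1) = -(m:ℤ)-1 := by ring
    rw [hneg]
    have hP : qPochN (-(1/a) * q^(-(m:ℤ)-1)) q (m+1) ≠ 0 := by
      rw [qPochN]
      apply Finset.prod_ne_zero_iff.mpr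
      intro j hj h0
      apply hfacinv ((j:ℤ)-m-1)
      have e : -(1/a) * q^(-(m:ℤ)-1) * q^(j:ℕ) = -(a⁻¹ * q^((j:ℤ)-m-1)) := by
        rw [← zpow_natCast q j, mul_assoc, ← zpow_add₀ hqne, one_div, neg_mul]
        congr 3
        ring
      rw [e] at h0
      linear_combination h0
    have hz1 : qPochZ (-(1/a)) q (-(m:ℤ)-1)
        = 1 / qPochN (-(1/a) * q^(-(m:ℤ)-1)) q (m+1) := by
      rw [qPochZ]
      have hsp := qPochInf_split (-(1/a) * q^(-(m:ℤ)-1)) q hq1 (m+1)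
      have harg : -(1/a) * q^(-(m:ℤ)-1) * q^((m+1:ℕ)) = -(1/a) := by
        rw [← zpow_natCast q (m+1), mul_assoc, ← zpow_add₀ hqne]
        norm_num
      rw [harg] at hsp
      rw [hsp, mul_comm, ← div_div, div_self hIa0]
    have hz2 : qPochZ (-(a*q)) q (-(m:ℤ)-1) = qPochInf (-(a*q)) q /
        (qPochN (-(a*q) * q^(-(m:ℤ)-1)) q (2*m+2) * gN a q (m+1)) := by
      rw [qPochZ]
      have hsp := qPochInf_split (-(a*q) * q^(-(m:ℤ)-1)) q hq1 (2*m+2)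
      have harg : -(a*q) * q^(-(m:ℤ)-1) * q^((2*m+2:ℕ)) = -(a*q) * q^((m+1:ℕ)) := by
        rw [← zpow_natCast q (2*m+2), mul_assoc, ← zpow_add₀ hqne, ← zpow_natCast q (m+1)]
        congr 2
        push_cast
        ring
      rw [harg] at hsp
      rw [hsp]
      rfl
    have hz3 : (-1:ℂ)^(-(m:ℤ)-1) = (-1:ℂ)^(m+1) := by
      have h2 : ((-1:ℂ)^((m:ℤ)+1)) = (-1:ℂ)^(m+1) := by
        rw [show ((m:ℤ)+1) = ((m+1 : ℕ) : ℤ) from by push_cast; ring, zpow_natCast]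
      have h3 : ((-1:ℂ)^(m+1)) * ((-1:ℂ)^(m+1)) = 1 := by
        rw [← pow_add]
        exact Even.neg_one_pow ⟨m+1, by ring⟩
      rw [show -(m:ℤ)-1 = -((m:ℤ)+1) by ring, zpow_neg, h2]
      exact inv_eq_of_mul_eq_one_left h3
    have ha4 : a^(-(m:ℤ)-1) = (a^(m+1))⁻¹ := by
      rw [show -(m:ℤ)-1 = -((m:ℤ)+1) by ring, zpow_neg,
        show ((m:ℤ)+1) = ((m+1 : ℕ) : ℤ) from by push_cast; ring, zpow_natCast]
    have hqE : q^(((s+1+u:ℕ):ℤ) * (-(m:ℤ)-1)^2 + (((s+1+u:ℕ):ℤ) + 1 - ((s+1:ℕ):ℤ)) * (-(m:ℤ)-1))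
          * q^((m+1:ℕ)) = q^(((m+1)*((s+1+u)*m+(s+1)) : ℕ)) := by
      rw [← zpow_natCast q (m+1), ← zpow_add₀ hqne, ← zpow_natCast q ((m+1)*((s+1+u)*m+(s+1)))]
      congr 1
      push_cast
      ring
    have hFN : FN a q (m+1) ≠ 0 := by
      rw [FN, qPochN]
      apply Finset.prod_ne_zero_iff.mpr
      intro j hj h0
      apply hfacinvN j
      rw [one_div] at h0
      linear_combination h0
    rw [hz1, hz2, hz3, ha4, PRD a q hqne ha m, CTn, ← hqE]
    have hd1 : (1 / qPochN (-(1/a) * q^(-(m:ℤ)-1)) q (m+1)) /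
        (qPochInf (-(a*q)) q / (qPochN (-(1/a) * q^(-(m:ℤ)-1)) q (m+1) * a^(2*m+2) * q^(m+1)
          * FN a q (m+1) * gN a q (m+1)))
        = a^(2*m+2) * q^(m+1) * FN a q (m+1) * gN a q (m+1) / qPochInf (-(a*q)) q := by
      rw [div_div_eq_mul_div, one_div_mul_eq_div, div_div]
      rw [show qPochN (-(1/a) * q^(-(m:ℤ)-1)) q (m+1) * a^(2*m+2) * q^(m+1)
          * FN a q (m+1) * gN a q (m+1)
        = qPochN (-(1/a) * q^(-(m:ℤ)-1)) q (m+1) * (a^(2*m+2) * q^(m+1)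
          * FN a q (m+1) * gN a q (m+1)) from by ring]
      rw [mul_div_mul_left _ _ hP]
    rw [hd1]
    rw [show a^(2*m+2) = a^(m+1) * a^(m+1) from by rw [← pow_add]; congr 1; omega]
    field_simp [hInfaq, pow_ne_zero (m+1) ha]
  -- assembly
  rw [Jgf]
  simp only [one_mul, mul_one, Nat.add_sub_cancel]
  rw [hH (s+1) (by omega), hH s (by omega)]
  rw [neg_mul, neg_mul, sub_neg_eq_add, ← mul_div_assoc, ← add_div]
  rw [← tsum_mul_left, ← Summable.tsum_add sum1 (sum0.mul_left (a*q))]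
  have hstep : ∑' n:ℕ, (AT (s+1+u) (s+1) a q n + a*q*AT (s+1+u) s a q n)
      = (∑' n:ℕ, CT (s+1+u) (s+1) a q n) + (∑' n:ℕ, CTn (s+1+u) (s+1) a q n) := by
    rw [← Summable.tsum_add sumC sumD]
    exact tsum_congr fun n => STEP s u a q hq1 ha n
  rw [hstep]
  rw [div_mul_eq_mul_div, ← tsum_mul_left]
  have hHS : HasSum (fun n : ℤ => qPochInf (-(a*q)) q * ((-1:ℂ)^n * a^n *
      q^(((s+1+u:ℕ):ℤ) * n^2 + (((s+1+u:ℕ):ℤ) + 1 - ((s+1:ℕ):ℤ)) * n) *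
      (qPochZ (-(1/a)) q n / qPochZ (-(a*q)) q n)))
      ((∑' n:ℕ, CT (s+1+u) (s+1) a q n) + (∑' n:ℕ, CTn (s+1+u) (s+1) a q n)) := by
    apply HasSum.of_nat_of_neg_add_one
    · have e : (fun n : ℕ => qPochInf (-(a*q)) q * ((-1:ℂ)^((n:ℕ):ℤ) * a^((n:ℕ):ℤ) *
          q^(((s+1+u:ℕ):ℤ) * ((n:ℕ):ℤ)^2 + (((s+1+u:ℕ):ℤ) + 1 - ((s+1:ℕ):ℤ)) * ((n:ℕ):ℤ)) *
          (qPochZ (-(1/a)) q ((n:ℕ):ℤ) / qPochZ (-(a*q)) q ((n:ℕ):ℤ))))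
          = CT (s+1+u) (s+1) a q := funext hcgN
      exact e ▸ sumC.hasSum
    · have e : (fun m : ℕ => qPochInf (-(a*q)) q * ((-1:ℂ)^(-((m:ℤ)+1)) * a^(-((m:ℤ)+1)) *
          q^(((s+1+u:ℕ):ℤ) * (-((m:ℤ)+1))^2 + (((s+1+u:ℕ):ℤ) + 1 - ((s+1:ℕ):ℤ)) * (-((m:ℤ)+1))) *
          (qPochZ (-(1/a)) q (-((m:ℤ)+1)) / qPochZ (-(a*q)) q (-((m:ℤ)+1)))))
          = CTn (s+1+u) (s+1) a q := funext hcgNeg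
      exact e ▸ sumD.hasSum
  rw [hHS.tsum_eq]

end Paper
end
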